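/- arXiv:1909.06105 — 3 statements merged into one kernel-verified Lean document; each statement's English description precedes it below -/
import Mathlib

section
/- If P is a set of points in general position in the plane with exactly two interior points (|I(P)| = 2), then P admits a convex decomposition with exactly 4 polygons, so u(P) ≤ 4 ≤ (4/3)·2 + (1/3)|B(P)| + 1. -/
/-- Points of the plane. -/
abbrev Pt := ℝ × ℝ

/-- A finite point set is in general position if no three of its points are collinear. -/
def GenPos (P : Finset Pt) : Prop :=
  ∀ p ∈ P, ∀ q ∈ P, ∀ r ∈ P, p ≠ q → q ≠ r → p ≠ r → ¬ Collinear ℝ ({p, q, r} : Set Pt)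

open Classical in
/-- The vertices of the convex hull of `P`. -/
noncomputable def hullB (P : Finset Pt) : Finset Pt :=
  P.filter (fun p => p ∉ convexHull ℝ ((P : Set Pt) \ {p}))

open Classical in
/-- The interior points of `P` (the points that are not hull vertices). -/
noncomputable def intI (P : Finset Pt) : Finset Pt := P \ hullB P

/-- A closed convex polygon with vertices in `P`. -/
def IsPolygonOn (P : Finset Pt) (C : Set Pt) : Prop :=
  ∃ V : Finset Pt, V ⊆ P ∧ 3 ≤ V.card ∧ C = convexHull ℝ (V : Set Pt)

/-- A convex decomposition of a region `R` with respect to `P`: closed convex polygons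
with vertices in `P`, pairwise disjoint interiors, union `R`, and no point of `P`
in the interior of any polygon. -/
def IsConvexDecompOfRegion (P : Finset Pt) (R : Set Pt) (D : Finset (Set Pt)) : Prop :=
  (∀ C ∈ D, IsPolygonOn P C) ∧
  (∀ C ∈ D, ∀ C' ∈ D, C ≠ C' → interior C ∩ interior C' = ∅) ∧
  (⋃ C ∈ D, C) = R ∧
  (∀ C ∈ D, ∀ p ∈ P, (p : Pt) ∉ interior C)

/-- A convex decomposition of the point set `P`. -/
def IsConvexDecomp (P : Finset Pt) (D : Finset (Set Pt)) : Prop :=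
  IsConvexDecompOfRegion P (convexHull ℝ (P : Set Pt)) D

/-- `uMin P` is the minimum number of polygons in a convex decomposition of `P`. -/
noncomputable def uMin (P : Finset Pt) : ℕ :=
  sInf {n | ∃ D : Finset (Set Pt), IsConvexDecomp P D ∧ D.card = n}

/-- `p` and `q` are the endpoints of an edge of the convex hull of `P`. -/
def IsHullEdge (P : Finset Pt) (p q : Pt) : Prop :=
  p ∈ hullB P ∧ q ∈ hullB P ∧ p ≠ q ∧
    segment ℝ p q ⊆ frontier (convexHull ℝ (P : Set Pt))

/-- `H` is the open half-plane with `q` and `q'` on its boundary containing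
no point of `I` (the outer half-plane of the edge `q q'` of `CH(I)`). -/
def IsOuterHalf (I : Finset Pt) (q q' : Pt) (H : Set Pt) : Prop :=
  ∃ f : Pt →ₗ[ℝ] ℝ, f ≠ 0 ∧ f q = f q' ∧ H = {x | f q < f x} ∧ ∀ r ∈ I, f r ≤ f q

/-- The angular domain at `a` bounded by the rays from `a` through `b` and through `c`,
containing the segment `b c`. -/
def angDom (a b c : Pt) : Set Pt :=
  {x | ∃ s t : ℝ, 0 ≤ s ∧ 0 ≤ t ∧ x = a + s • (b - a) + t • (c - a)}

/-- Every triangle of three consecutive hull vertices of `P` contains a point of `P`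
in its interior. -/
def TripleFilled (P : Finset Pt) : Prop :=
  ∀ a p c : Pt, IsHullEdge P a p → IsHullEdge P p c → a ≠ c →
    (interior (convexHull ℝ ({a, p, c} : Set Pt)) ∩ (P : Set Pt)).Nonempty

/-- Every outer open half-plane of a hull edge of `I(P)` contains exactly one
hull vertex of `P`. -/
def OuterOne (P : Finset Pt) : Prop :=
  ∀ q q' H, IsHullEdge (intI P) q q' → IsOuterHalf (intI P) q q' H →
    ((hullB P : Set Pt) ∩ H).ncard = 1

open Set

noncomputable def crossL (d : Pt) : Pt →ₗ[ℝ] ℝ where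
  toFun z := d.2 * z.1 - d.1 * z.2
  map_add' p q := by simp only [Prod.fst_add, Prod.snd_add]; ring
  map_smul' c p := by
    simp only [Prod.smul_fst, Prod.smul_snd, smul_eq_mul, RingHom.id_apply]; ring

lemma crossL_apply (d z : Pt) : crossL d z = d.2 * z.1 - d.1 * z.2 := rfl

lemma crossL_self (d : Pt) : crossL d d = 0 := by simp [crossL_apply]; ring

lemma crossL_swap (d e : Pt) : crossL d e = -crossL e d := by simp [crossL_apply]; ring

lemma crossL_cont (d : Pt) : Continuous fun z : Pt => crossL d z :=
  (crossL d).continuous_of_finiteDimensional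

lemma crossL_perp (d : Pt) (hd : d ≠ 0) : crossL d (-d.2, d.1) ≠ 0 := by
  have : crossL d (-d.2, d.1) = -(d.1^2 + d.2^2) := by simp [crossL_apply]; ring
  rw [this, neg_ne_zero]
  have hd' : d.1 ≠ 0 ∨ d.2 ≠ 0 := by
    by_contra h
    push_neg at h
    exact hd (Prod.ext h.1 h.2)
  rcases hd' with h | h <;> positivity

lemma decompose {d₁ d₂ : Pt} (h : crossL d₁ d₂ ≠ 0) (w : Pt) :
    w = (crossL d₂ w / crossL d₂ d₁) • d₁ + (crossL d₁ w / crossL d₁ d₂) • d₂ := by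
  have h' : crossL d₂ d₁ ≠ 0 := by rw [crossL_swap]; exact neg_ne_zero.2 h
  apply Prod.ext <;>
  · simp only [crossL_apply, Prod.fst_add, Prod.snd_add, Prod.smul_fst, Prod.smul_snd,
      smul_eq_mul] at *
    rw [div_mul_eq_mul_div, div_mul_eq_mul_div, div_add_div _ _ h' h, eq_div_iff (mul_ne_zero h' h)]
    ring

lemma eq_smul_of_crossL_eq_zero {d w : Pt} (hd : d ≠ 0) (h : crossL d w = 0) :
    ∃ c : ℝ, w = c • d := by
  have hperp := crossL_perp d hd
  have hdec := decompose hperp w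
  rw [h, zero_div, zero_smul, add_zero] at hdec
  exact ⟨_, hdec⟩
lemma collinear_of_crossL {p q r : Pt} (hpq : q - p ≠ 0)
    (h : crossL (q - p) (r - p) = 0) : Collinear ℝ ({p, q, r} : Set Pt) := by
  obtain ⟨c, hc⟩ := eq_smul_of_crossL_eq_zero hpq h
  rw [collinear_iff_of_mem (show p ∈ ({p, q, r} : Set Pt) by simp)]
  refine ⟨q - p, ?_⟩
  rintro x (rfl | rfl | rfl)
  · exact ⟨0, by simp⟩
  · exact ⟨1, by simp⟩
  · exact ⟨c, by rw [← hc]; simp⟩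

lemma combo3 {p q r z : Pt} {α β : ℝ} (hα : 0 ≤ α) (hβ : 0 ≤ β) (hs : α + β ≤ 1)
    (hz : z = p + α • (q - p) + β • (r - p)) :
    z ∈ convexHull ℝ ({p, q, r} : Set Pt) := by
  have hp : p ∈ convexHull ℝ ({p, q, r} : Set Pt) := subset_convexHull _ _ (by simp)
  rcases eq_or_lt_of_le (add_nonneg hα hβ) with h0 | hσ
  · have hα0 : α = 0 := by linarith
    have hβ0 : β = 0 := by linarith
    rw [hz, hα0, hβ0, zero_smul, zero_smul, add_zero, add_zero]; exact hp
  · set σ := α + β with hσdef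
    have hσ' : σ ≠ 0 := ne_of_gt hσ
    have hm : (α/σ) • q + (β/σ) • r ∈ convexHull ℝ ({p, q, r} : Set Pt) := by
      apply convexHull_mono (show ({q, r} : Set Pt) ⊆ {p, q, r} by intro x hx; simp at hx; simp [hx])
      rw [convexHull_pair]
      exact ⟨α/σ, β/σ, by positivity, by positivity, by field_simp; linarith, rfl⟩
    have hz' : z = (1 - σ) • p + σ • ((α/σ) • q + (β/σ) • r) := by
      rw [hz, smul_add, smul_smul, smul_smul, mul_div_cancel₀ _ hσ', mul_div_cancel₀ _ hσ']
      module
    rw [hz']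
    exact (convex_convexHull ℝ _) hp hm (by linarith) hσ.le (by ring)

lemma combo3' {p q r z : Pt} (hz : z ∈ convexHull ℝ ({p, q, r} : Set Pt)) :
    ∃ α β : ℝ, 0 ≤ α ∧ 0 ≤ β ∧ α + β ≤ 1 ∧ z = p + α • (q - p) + β • (r - p) := by
  have h3 : ({p, q, r} : Set Pt) = insert p {q, r} := rfl
  rw [h3, convexHull_insert ⟨q, by simp⟩] at hz
  obtain ⟨w0, hw0, hzw⟩ := mem_iUnion₂.1 hz
  rw [mem_singleton_iff] at hw0
  rw [hw0] at hzw
  obtain ⟨w, hw, hzw'⟩ := mem_iUnion₂.1 hzw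
  rw [convexHull_pair] at hw
  obtain ⟨τ₁, τ₂, hτ₁, hτ₂, hτ, hwdef⟩ := hw
  obtain ⟨θ₁, θ₂, hθ₁, hθ₂, hθ, hzdef⟩ := hzw'
  refine ⟨θ₂ * τ₁, θ₂ * τ₂, by positivity, by positivity, ?_, ?_⟩
  · have : θ₂ * τ₁ + θ₂ * τ₂ = θ₂ := by rw [← mul_add, hτ, mul_one]
    linarith
  · rw [← hzdef, ← hwdef]
    have h1 : θ₁ = 1 - θ₂ := by linarith
    have h2 : τ₂ = 1 - τ₁ := by linarith
    rw [h1, h2]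
    module

lemma triangle_coord_eval {p q r : Pt} (hind : crossL (q - p) (r - p) ≠ 0) (α β : ℝ) :
    crossL (r - p) ((p + α • (q - p) + β • (r - p)) - p) / crossL (r - p) (q - p) = α ∧
    crossL (q - p) ((p + α • (q - p) + β • (r - p)) - p) / crossL (q - p) (r - p) = β := by
  have hd' : crossL (r - p) (q - p) ≠ 0 := by rw [crossL_swap]; exact neg_ne_zero.2 hind
  have he : (p + α • (q - p) + β • (r - p)) - p = α • (q - p) + β • (r - p) := by module
  constructor
  · rw [he, map_add, map_smul, map_smul, crossL_self, smul_eq_mul, smul_eq_mul, mul_zero,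
      add_zero, mul_div_assoc, div_self hd', mul_one]
  · rw [he, map_add, map_smul, map_smul, crossL_self, smul_eq_mul, smul_eq_mul, mul_zero,
      zero_add, mul_div_assoc, div_self hind, mul_one]

lemma mem_interior_triangle {p q r z : Pt} (hind : crossL (q - p) (r - p) ≠ 0)
    {α β : ℝ} (hα : 0 < α) (hβ : 0 < β) (hs : α + β < 1)
    (hz : z = p + α • (q - p) + β • (r - p)) :
    z ∈ interior (convexHull ℝ ({p, q, r} : Set Pt)) := by
  have hd' : crossL (r - p) (q - p) ≠ 0 := by rw [crossL_swap]; exact neg_ne_zero.2 hind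
  set F₁ : Pt → ℝ := fun w => crossL (r - p) (w - p) / crossL (r - p) (q - p) with hF₁def
  set F₂ : Pt → ℝ := fun w => crossL (q - p) (w - p) / crossL (q - p) (r - p) with hF₂def
  have hc₁ : Continuous F₁ := by
    apply Continuous.div_const
    exact (crossL_cont _).comp (continuous_id.sub continuous_const)
  have hc₂ : Continuous F₂ := by
    apply Continuous.div_const
    exact (crossL_cont _).comp (continuous_id.sub continuous_const)
  set U : Set Pt := {w | 0 < F₁ w ∧ 0 < F₂ w ∧ F₁ w + F₂ w < 1} with hUdef
  have hUopen : IsOpen U := by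
    apply IsOpen.inter (isOpen_lt continuous_const hc₁)
    exact IsOpen.inter (isOpen_lt continuous_const hc₂)
      (isOpen_lt (hc₁.add hc₂) continuous_const)
  have hUsub : U ⊆ convexHull ℝ ({p, q, r} : Set Pt) := by
    intro w hw
    obtain ⟨hw₁, hw₂, hw₃⟩ := hw
    refine combo3 hw₁.le hw₂.le hw₃.le ?_
    have hthis := decompose hind (w - p)
    have h2 : w = p + (w - p) := by module
    rw [hthis] at h2
    exact h2.trans (by module)
  apply mem_interior.2 ⟨U, hUsub, hUopen, ?_⟩
  obtain ⟨e₁, e₂⟩ := triangle_coord_eval hind α β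
  have hz₁ : F₁ z = α := by rw [hF₁def, hz]; exact e₁
  have hz₂ : F₂ z = β := by rw [hF₂def, hz]; exact e₂
  exact ⟨by rw [hz₁]; exact hα, by rw [hz₂]; exact hβ, by rw [hz₁, hz₂]; exact hs⟩

lemma interior_triangle_nonempty {p q r : Pt} (hind : crossL (q - p) (r - p) ≠ 0) :
    (interior (convexHull ℝ ({p, q, r} : Set Pt))).Nonempty :=
  ⟨_, mem_interior_triangle hind (by norm_num : (0:ℝ) < 1/4) (by norm_num : (0:ℝ) < 1/4)
    (by norm_num) rfl⟩

lemma lineOpen {U : Set Pt} (hU : IsOpen U) {z : Pt} (hz : z ∈ U) (w : Pt) :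
    ∃ δ : ℝ, 0 < δ ∧ ∀ t : ℝ, |t| < δ → z + t • w ∈ U := by
  have hc : Continuous fun t : ℝ => z + t • w := by continuity
  have hop : IsOpen ((fun t : ℝ => z + t • w) ⁻¹' U) := hU.preimage hc
  have h0 : (0:ℝ) ∈ (fun t : ℝ => z + t • w) ⁻¹' U := by simp [hz]
  rcases Metric.isOpen_iff.1 hop 0 h0 with ⟨δ, hδ, hball⟩
  exact ⟨δ, hδ, fun t ht => hball (by simpa [Real.dist_eq] using ht)⟩

lemma mem_interior_lt {f : Pt →ₗ[ℝ] ℝ} {w : Pt} (hw : f w ≠ 0) {c : ℝ} {s : Set Pt}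
    (hs : s ⊆ {z | f z ≤ c}) {z : Pt} (hz : z ∈ interior s) : f z < c := by
  have hzc : f z ≤ c := hs (interior_subset hz)
  rcases lt_or_eq_of_le hzc with h | h
  · exact h
  · exfalso
    obtain ⟨δ, hδ, hball⟩ := lineOpen isOpen_interior hz ((f w)⁻¹ • w)
    have hmem : z + (δ/2) • ((f w)⁻¹ • w) ∈ s :=
      interior_subset (hball (δ/2) (by rw [abs_of_pos (by linarith)]; linarith))
    have := hs hmem
    simp only [map_add, map_smul, smul_eq_mul, mem_setOf_eq] at this
    rw [inv_mul_cancel₀ hw] at this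
    rw [h] at this
    linarith
lemma mem_hullB_iff {P : Finset Pt} {p : Pt} :
    p ∈ hullB P ↔ p ∈ P ∧ p ∉ convexHull ℝ ((P : Set Pt) \ {p}) := by
  classical
  simp [hullB, Finset.mem_filter]

lemma hullB_subset (P : Finset Pt) : hullB P ⊆ P := fun p hp => (mem_hullB_iff.1 hp).1

lemma exit_ray {P : Finset Pt} {b o : Pt} (hB : b ∈ hullB P)
    (ho : o ∈ convexHull ℝ ((P : Set Pt) \ {b})) {r : ℝ} (hr : 1 < r) :
    o + r • (b - o) ∉ convexHull ℝ (P : Set Pt) := by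
  intro hy
  obtain ⟨hbP, hbnc⟩ := mem_hullB_iff.1 hB
  have hPeq : (P : Set Pt) = insert b ((P : Set Pt) \ {b}) := by
    rw [insert_diff_singleton, insert_eq_self.2 (Finset.mem_coe.mpr hbP)]
  have hne : ((P : Set Pt) \ {b}).Nonempty := by
    by_contra h
    rw [not_nonempty_iff_eq_empty] at h
    rw [h] at ho
    simp at ho
  rw [hPeq, convexHull_insert hne] at hy
  obtain ⟨b0, hb0, hy'⟩ := mem_iUnion₂.1 hy
  rw [mem_singleton_iff] at hb0
  rw [hb0] at hy'
  obtain ⟨w, hw, hyw⟩ := mem_iUnion₂.1 hy'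
  obtain ⟨μ₁, μ₂, hμ₁, hμ₂, hμ, heq⟩ := hyw
  -- heq : μ₁ • b + μ₂ • w = o + r • (b - o)
  apply hbnc
  have hrμ : 0 < r - μ₁ := by linarith
  have hbeq : b = (μ₂ / (r - μ₁)) • w + ((r - 1) / (r - μ₁)) • o := by
    have h1 : (r - μ₁) • b = μ₂ • w + (r - 1) • o := by
      have h2 : μ₁ • b + μ₂ • w = o + r • (b - o) := heq
      have h3 : μ₂ • w = o + r • (b - o) - μ₁ • b := by
        rw [← h2]; module
      rw [h3]; module
    have h4 := congrArg (fun z => (r - μ₁)⁻¹ • z) h1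
    simp only [smul_smul, inv_mul_cancel₀ hrμ.ne', one_smul] at h4
    rw [h4, smul_add, smul_smul, smul_smul]
    rw [div_eq_inv_mul, div_eq_inv_mul]
  have hsum : μ₂ / (r - μ₁) + (r - 1) / (r - μ₁) = 1 := by
    rw [← add_div, div_eq_one_iff_eq hrμ.ne']
    linarith
  have hfin := (convex_convexHull ℝ ((P : Set Pt) \ {b})) hw ho
    (by apply div_nonneg <;> linarith) (by apply div_nonneg <;> linarith) hsum
  rwa [← hbeq] at hfin

lemma mem_convexHull_diff {W : Set Pt} {z : Pt}
    (h : z ∈ interior (convexHull ℝ W)) : z ∈ convexHull ℝ (W \ {z}) := by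
  obtain ⟨y, hyW, hyz⟩ : ∃ y, y ∈ W ∧ y ≠ z := by
    by_contra hc
    push_neg at hc
    have hW : W ⊆ {z} := fun w hw => (hc w hw)
    have : convexHull ℝ W ⊆ {z} := convexHull_min hW (convex_singleton z)
    have h2 : z ∈ interior ({z} : Set Pt) := interior_mono this h
    rw [interior_singleton] at h2
    exact h2
  obtain ⟨δ, hδ, hball⟩ := lineOpen isOpen_interior h (z - y)
  set z' := z + (δ/2) • (z - y) with hz'def
  have hz' : z' ∈ convexHull ℝ W :=
    interior_subset (hball (δ/2) (by rw [abs_of_pos (by linarith)]; linarith))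
  have hWsub : convexHull ℝ W ⊆ convexHull ℝ (insert z (W \ {z})) := by
    apply convexHull_mono
    intro w hw
    rcases eq_or_ne w z with rfl | hne
    · exact mem_insert _ _
    · exact mem_insert_of_mem _ ⟨hw, hne⟩
  have hz'' := hWsub hz'
  have hWne : (W \ {z}).Nonempty := ⟨y, hyW, hyz⟩
  rw [convexHull_insert hWne] at hz''
  obtain ⟨z0, hz0, hz'''⟩ := mem_iUnion₂.1 hz''
  rw [mem_singleton_iff] at hz0
  rw [hz0] at hz'''
  obtain ⟨w, hw, hzw⟩ := mem_iUnion₂.1 hz'''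
  obtain ⟨μ₁, μ₂, hμ₁, hμ₂, hμ, heq⟩ := hzw
  -- heq : μ₁ • z + μ₂ • w = z' = z + (δ/2) • (z - y)
  have hyW' : y ∈ convexHull ℝ (W \ {z}) := subset_convexHull _ _ ⟨hyW, hyz⟩
  set ε := δ/2 with hεdef
  have hε : 0 < ε := by positivity
  have hcoef : 0 < 1 + ε - μ₁ := by linarith
  have hzeq : z = (μ₂ / (1 + ε - μ₁)) • w + (ε / (1 + ε - μ₁)) • y := by
    have h1 : (1 + ε - μ₁) • z = μ₂ • w + ε • y := by
      have h2 : μ₁ • z + μ₂ • w = z + ε • (z - y) := heq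
      have h3 : μ₂ • w = z + ε • (z - y) - μ₁ • z := by rw [← h2]; module
      rw [h3]; module
    have h4 := congrArg (fun u => (1 + ε - μ₁)⁻¹ • u) h1
    simp only [smul_smul, inv_mul_cancel₀ hcoef.ne', one_smul] at h4
    rw [h4, smul_add, smul_smul, smul_smul, div_eq_inv_mul, div_eq_inv_mul]
  have hsum : μ₂ / (1 + ε - μ₁) + ε / (1 + ε - μ₁) = 1 := by
    rw [← add_div, div_eq_one_iff_eq hcoef.ne']
    linarith
  have hfin := (convex_convexHull ℝ (W \ {z})) hw hyW' (by positivity) (by positivity) hsum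
  rwa [← hzeq] at hfin
lemma extreme_inter {K : Set Pt} (hK : Convex ℝ K) {f : Pt →ₗ[ℝ] ℝ} {c : ℝ} {z : Pt}
    (hz : z ∈ Set.extremePoints ℝ (K ∩ {w | f w ≤ c})) :
    f z = c ∨ z ∈ Set.extremePoints ℝ K := by
  obtain ⟨⟨hzK, hzc⟩, hext⟩ := hz
  have hzc' : f z ≤ c := hzc
  rcases eq_or_lt_of_le hzc' with h | h
  · exact Or.inl h
  · right
    refine ⟨hzK, ?_⟩
    intro x hx y hy hseg
    have hU : IsOpen {w : Pt | f w < c} :=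
      isOpen_lt (f.continuous_of_finiteDimensional) continuous_const
    obtain ⟨δ₁, hδ₁, h₁⟩ := lineOpen hU h (x - z)
    obtain ⟨δ₂, hδ₂, h₂⟩ := lineOpen hU h (y - z)
    set ε := min (min δ₁ δ₂ / 2) (1/2) with hεdef
    have hε : 0 < ε := by
      apply lt_min (by positivity) (by norm_num)
    have hε1 : ε < 1 := lt_of_le_of_lt (min_le_right _ _) (by norm_num)
    have hεδ₁ : ε < δ₁ := by
      have : ε ≤ min δ₁ δ₂ / 2 := min_le_left _ _
      have h3 : min δ₁ δ₂ ≤ δ₁ := min_le_left _ _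
      linarith
    have hεδ₂ : ε < δ₂ := by
      have : ε ≤ min δ₁ δ₂ / 2 := min_le_left _ _
      have h3 : min δ₁ δ₂ ≤ δ₂ := min_le_right _ _
      linarith
    set x' := z + ε • (x - z) with hx'def
    set y' := z + ε • (y - z) with hy'def
    have hx'K : x' ∈ K := by
      have hmem := hK hzK hx (by linarith : (0:ℝ) ≤ 1 - ε) hε.le (by ring)
      have : (1 - ε) • z + ε • x = x' := by rw [hx'def]; module
      rwa [this] at hmem
    have hy'K : y' ∈ K := by
      have hmem := hK hzK hy (by linarith : (0:ℝ) ≤ 1 - ε) hε.le (by ring)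
      have : (1 - ε) • z + ε • y = y' := by rw [hy'def]; module
      rwa [this] at hmem
    have hx'c : f x' < c := h₁ ε (by rw [abs_of_pos hε]; exact hεδ₁)
    have hy'c : f y' < c := h₂ ε (by rw [abs_of_pos hε]; exact hεδ₂)
    obtain ⟨a, b, ha, hb, hab, habz⟩ := hseg
    have key : a • x' + b • y' = (a + b) • z + ε • ((a • x + b • y) - (a + b) • z) := by
      rw [hx'def, hy'def]; module
    rw [hab, habz, one_smul, sub_self, smul_zero, add_zero] at key
    have hres := hext ⟨hx'K, hx'c.le⟩ ⟨hy'K, hy'c.le⟩ ⟨a, b, ha, hb, hab, key⟩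
    have hxz : x = z := by
      have h0 : ε • (x - z) = 0 := by
        have := hres
        rw [hx'def] at this
        have h5 := congrArg (fun w => w - z) this
        simpa using h5
      rcases smul_eq_zero.1 h0 with h5 | h5
      · exact absurd h5 hε.ne'
      · exact sub_eq_zero.1 h5
    exact hxz

lemma polyCut {P : Finset Pt} {f₁ f₂ f₃ : Pt →ₗ[ℝ] ℝ} {c₁ c₂ c₃ : ℝ} {V : Finset Pt}
    (hVP : ∀ v ∈ V, (v : Pt) ∈ (P : Set Pt) ∧ f₁ v ≤ c₁ ∧ f₂ v ≤ c₂ ∧ f₃ v ≤ c₃)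
    (hext : ∀ z ∈ Set.extremePoints ℝ (convexHull ℝ (P : Set Pt)),
        f₁ z ≤ c₁ → f₂ z ≤ c₂ → f₃ z ≤ c₃ → z ∈ convexHull ℝ (V : Set Pt))
    (h₁ : ∀ z ∈ convexHull ℝ (P : Set Pt),
        f₁ z = c₁ → f₂ z ≤ c₂ → f₃ z ≤ c₃ → z ∈ convexHull ℝ (V : Set Pt))
    (h₂ : ∀ z ∈ convexHull ℝ (P : Set Pt),
        f₂ z = c₂ → f₁ z ≤ c₁ → f₃ z ≤ c₃ → z ∈ convexHull ℝ (V : Set Pt))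
    (h₃ : ∀ z ∈ convexHull ℝ (P : Set Pt),
        f₃ z = c₃ → f₁ z ≤ c₁ → f₂ z ≤ c₂ → z ∈ convexHull ℝ (V : Set Pt)) :
    ((convexHull ℝ (P : Set Pt) ∩ {z | f₁ z ≤ c₁}) ∩ {z | f₂ z ≤ c₂}) ∩ {z | f₃ z ≤ c₃}
      = convexHull ℝ (V : Set Pt) := by
  set K := convexHull ℝ (P : Set Pt) with hKdef
  have hKconv : Convex ℝ K := convex_convexHull _ _
  have hKcomp : IsCompact K := P.finite_toSet.isCompact_convexHull ℝ
  have hc₁ : Convex ℝ {z : Pt | f₁ z ≤ c₁} := convex_halfSpace_le f₁.isLinear c₁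
  have hc₂ : Convex ℝ {z : Pt | f₂ z ≤ c₂} := convex_halfSpace_le f₂.isLinear c₂
  have hc₃ : Convex ℝ {z : Pt | f₃ z ≤ c₃} := convex_halfSpace_le f₃.isLinear c₃
  have hcl₁ : IsClosed {z : Pt | f₁ z ≤ c₁} :=
    isClosed_le f₁.continuous_of_finiteDimensional continuous_const
  have hcl₂ : IsClosed {z : Pt | f₂ z ≤ c₂} :=
    isClosed_le f₂.continuous_of_finiteDimensional continuous_const
  have hcl₃ : IsClosed {z : Pt | f₃ z ≤ c₃} :=
    isClosed_le f₃.continuous_of_finiteDimensional continuous_const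
  set R := ((K ∩ {z | f₁ z ≤ c₁}) ∩ {z | f₂ z ≤ c₂}) ∩ {z | f₃ z ≤ c₃} with hRdef
  have hRconv : Convex ℝ R := ((hKconv.inter hc₁).inter hc₂).inter hc₃
  have hRcomp : IsCompact R :=
    ((hKcomp.inter_right hcl₁).inter_right hcl₂).inter_right hcl₃
  have hsub : Set.extremePoints ℝ R ⊆ convexHull ℝ (V : Set Pt) := by
    intro z hz
    have hzR : z ∈ R := extremePoints_subset hz
    obtain ⟨⟨⟨hzK, hz1⟩, hz2⟩, hz3⟩ := hzR
    rcases extreme_inter ((hKconv.inter hc₁).inter hc₂) hz with he₃ | hz'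
    · exact h₃ z hzK he₃ hz1 hz2
    rcases extreme_inter (hKconv.inter hc₁) hz' with he₂ | hz''
    · exact h₂ z hzK he₂ hz1 hz3
    rcases extreme_inter hKconv hz'' with he₁ | hz'''
    · exact h₁ z hzK he₁ hz2 hz3
    · exact hext z hz''' hz1 hz2 hz3
  have hKM := closure_convexHull_extremePoints hRcomp hRconv
  have hclosedV : IsClosed (convexHull ℝ (V : Set Pt)) := V.finite_toSet.isClosed_convexHull ℝ
  apply Set.Subset.antisymm
  · calc R = closure (convexHull ℝ (Set.extremePoints ℝ R)) := hKM.symm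
    _ ⊆ closure (convexHull ℝ (V : Set Pt)) := by
        apply closure_mono
        exact convexHull_min hsub (convex_convexHull _ _)
    _ = convexHull ℝ (V : Set Pt) := hclosedV.closure_eq
  · refine convexHull_min (fun v hv => ?_) hRconv
    obtain ⟨hvP, hv1, hv2, hv3⟩ := hVP v hv
    exact ⟨⟨⟨subset_convexHull _ _ hvP, hv1⟩, hv2⟩, hv3⟩
lemma seg_case {S : Set Pt} {p q z : Pt} (hp : p ∈ S) (hq : q ∈ S) {a b : ℝ}
    (ha : 0 ≤ a) (hb : 0 ≤ b) (hab : a + b = 1) (hz : z = a • p + b • q) :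
    z ∈ S ∨ (∃ p' ∈ S, ∃ q' ∈ S, p' ≠ q' ∧ z ≠ p' ∧ z ≠ q' ∧
      ∃ a' b' : ℝ, 0 < a' ∧ 0 < b' ∧ a' + b' = 1 ∧ z = a' • p' + b' • q') := by
  rcases eq_or_ne p q with rfl | hpq
  · left; rw [hz, ← add_smul, hab, one_smul]; exact hp
  rcases eq_or_lt_of_le ha with ha0 | ha'
  · left
    rw [hz, ← ha0, zero_smul, zero_add, show b = 1 by linarith, one_smul]
    exact hq
  rcases eq_or_lt_of_le hb with hb0 | hb'
  · left
    rw [hz, ← hb0, show a = 1 by linarith, one_smul, zero_smul, add_zero]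
    exact hp
  · right
    refine ⟨p, hp, q, hq, hpq, ?_, ?_, a, b, ha', hb', hab, hz⟩
    · intro h
      have h1 : z - p = b • (q - p) := by
        rw [hz, show a = 1 - b by linarith]; module
      rw [h, sub_self] at h1
      rcases smul_eq_zero.1 h1.symm with h5 | h5
      · exact hb'.ne' h5
      · exact hpq (sub_eq_zero.1 h5).symm
    · intro h
      have h1 : z - q = a • (p - q) := by
        rw [hz, show b = 1 - a by linarith]; module
      rw [h, sub_self] at h1
      rcases smul_eq_zero.1 h1.symm with h5 | h5
      · exact ha'.ne' h5
      · exact hpq (sub_eq_zero.1 h5)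

lemma cara {S : Set Pt} {z : Pt}
    (hnc : ∀ p q r : Pt, p ∈ S → q ∈ S → r ∈ S → p ≠ q → q ≠ r → p ≠ r →
      crossL (q - p) (r - p) ≠ 0)
    (hz : z ∈ convexHull ℝ S) :
    z ∈ S ∨
    (∃ p ∈ S, ∃ q ∈ S, p ≠ q ∧ z ≠ p ∧ z ≠ q ∧
      ∃ a b : ℝ, 0 < a ∧ 0 < b ∧ a + b = 1 ∧ z = a • p + b • q) ∨
    z ∈ interior (convexHull ℝ S) := by
  rw [convexHull_eq_union] at hz
  simp only [mem_iUnion, exists_prop] at hz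
  obtain ⟨t, hts, hti, hzt⟩ := hz
  have hcard : t.card ≤ 3 := by
    have h1 := hti.card_le_finrank_succ
    rw [Fintype.card_coe] at h1
    have h4 : t.card ≤ Module.finrank ℝ Pt + 1 :=
      h1.trans (Nat.add_le_add_right (Submodule.finrank_le _) 1)
    have h2 : Module.finrank ℝ Pt = 2 := by
      simp [Module.finrank_prod, Module.finrank_self]
    rw [h2] at h4
    omega
  interval_cases hc : t.card
  · rw [Finset.card_eq_zero] at hc
    subst hc
    simp at hzt
  · rw [Finset.card_eq_one] at hc
    obtain ⟨p, rfl⟩ := hc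
    simp only [Finset.coe_singleton, convexHull_singleton, mem_singleton_iff] at hzt
    left
    rw [hzt]
    exact hts (by simp)
  · rw [Finset.card_eq_two] at hc
    obtain ⟨p, q, hpq, rfl⟩ := hc
    have hco : (↑({p, q} : Finset Pt) : Set Pt) = {p, q} := by simp
    rw [hco, convexHull_pair] at hzt
    obtain ⟨a, b, ha, hb, hab, habz⟩ := hzt
    have hpS : p ∈ S := hts (by simp)
    have hqS : q ∈ S := hts (by simp)
    rcases seg_case hpS hqS ha hb hab habz.symm with h | h
    · exact Or.inl h
    · exact Or.inr (Or.inl h)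
  · rw [Finset.card_eq_three] at hc
    obtain ⟨p, q, r, hpq, hpr, hqr, rfl⟩ := hc
    have hco : (↑({p, q, r} : Finset Pt) : Set Pt) = {p, q, r} := by simp
    rw [hco] at hzt
    have hpS : p ∈ S := hts (by simp)
    have hqS : q ∈ S := hts (by simp)
    have hrS : r ∈ S := hts (by simp)
    obtain ⟨α, β, hα, hβ, hsum, hzeq⟩ := combo3' hzt
    rcases eq_or_lt_of_le hα with hα0 | hα'
    · have heq : z = (1 - β) • p + β • r := by rw [hzeq, ← hα0]; module
      rcases seg_case hpS hrS (by linarith) hβ (by ring) heq with h | h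
      · exact Or.inl h
      · exact Or.inr (Or.inl h)
    rcases eq_or_lt_of_le hβ with hβ0 | hβ'
    · have heq : z = (1 - α) • p + α • q := by rw [hzeq, ← hβ0]; module
      rcases seg_case hpS hqS (by linarith) hα'.le (by ring) heq with h | h
      · exact Or.inl h
      · exact Or.inr (Or.inl h)
    rcases eq_or_lt_of_le hsum with hsum1 | hsum'
    · have heq : z = α • q + β • r := by
        rw [hzeq, show β = 1 - α by linarith]; module
      rcases seg_case hqS hrS hα'.le (by linarith) (by linarith) heq with h | h
      · exact Or.inl h
      · exact Or.inr (Or.inl h)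
    · right; right
      have hind := hnc p q r hpS hqS hrS hpq hqr hpr
      have hint := mem_interior_triangle hind hα' hβ' hsum' hzeq
      have hmono : convexHull ℝ ({p, q, r} : Set Pt) ⊆ convexHull ℝ S := by
        apply convexHull_mono
        intro w hw
        rcases hw with rfl | rfl | rfl
        exacts [hpS, hqS, hrS]
      exact interior_mono hmono hint

lemma maxray {P : Finset Pt} {o : Pt} (d : Pt) (hd : d ≠ 0)
    (ho : o ∈ interior (convexHull ℝ (P : Set Pt))) :
    ∃ t : ℝ, 0 < t ∧ o + t • d ∈ convexHull ℝ (P : Set Pt) ∧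
      o + t • d ∉ interior (convexHull ℝ (P : Set Pt)) := by
  set K := convexHull ℝ (P : Set Pt) with hKdef
  have hKcomp : IsCompact K := P.finite_toSet.isCompact_convexHull ℝ
  have hKcl : IsClosed K := hKcomp.isClosed
  obtain ⟨C, hC⟩ := isBounded_iff_forall_norm_le.1 hKcomp.isBounded
  set S := {t : ℝ | 0 ≤ t ∧ o + t • d ∈ K} with hSdef
  have hSne : S.Nonempty := ⟨0, le_refl 0, by simpa using interior_subset ho⟩
  have hdn : 0 < ‖d‖ := norm_pos_iff.2 hd
  have hSbdd : BddAbove S := by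
    refine ⟨(C + ‖o‖) / ‖d‖, fun t ht => ?_⟩
    obtain ⟨ht0, htK⟩ := ht
    have h1 : ‖o + t • d‖ ≤ C := hC _ htK
    have h2 : t * ‖d‖ = ‖t • d‖ := by
      rw [norm_smul, Real.norm_eq_abs, abs_of_nonneg ht0]
    have h3 : ‖t • d‖ ≤ ‖o + t • d‖ + ‖o‖ := by
      have hns := norm_sub_le (o + t • d) o
      have h4 : o + t • d - o = t • d := by module
      rw [h4] at hns
      linarith
    rw [le_div_iff₀ hdn]
    calc t * ‖d‖ = ‖t • d‖ := h2
      _ ≤ ‖o + t • d‖ + ‖o‖ := h3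
      _ ≤ C + ‖o‖ := by linarith
  have hScl : IsClosed S := by
    have h1 : S = {t : ℝ | 0 ≤ t} ∩ (fun t : ℝ => o + t • d) ⁻¹' K := by
      ext t; simp [hSdef]
    rw [h1]
    exact (isClosed_le continuous_const continuous_id).inter
      (hKcl.preimage (by continuity))
  set T := sSup S with hTdef
  have hTS : T ∈ S := hScl.csSup_mem hSne hSbdd
  obtain ⟨δ, hδ, hball⟩ := lineOpen isOpen_interior ho d
  have hT0 : 0 < T := by
    have hδS : δ/2 ∈ S := by
      refine ⟨by linarith, interior_subset (hball (δ/2) ?_)⟩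
      rw [abs_of_pos (by linarith)]; linarith
    have := le_csSup hSbdd hδS
    linarith
  refine ⟨T, hT0, hTS.2, ?_⟩
  intro hint
  obtain ⟨δ', hδ', hball'⟩ := lineOpen isOpen_interior hint d
  have hmem : o + (T + δ'/2) • d ∈ K := by
    have h1 := interior_subset (hball' (δ'/2) (by rw [abs_of_pos (by linarith)]; linarith))
    have h2 : o + T • d + (δ'/2) • d = o + (T + δ'/2) • d := by module
    rwa [h2] at h1
  have : T + δ'/2 ∈ S := ⟨by linarith, hmem⟩
  have := le_csSup hSbdd this
  linarith

lemma support_at {P : Finset Pt} {x u : Pt}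
    (hu : u ∈ interior (convexHull ℝ (P : Set Pt)))
    (hx : x ∉ interior (convexHull ℝ (P : Set Pt))) :
    ∃ h : Pt →ₗ[ℝ] ℝ, (∀ z ∈ convexHull ℝ (P : Set Pt), h z ≤ h x) ∧ h u < h x := by
  obtain ⟨f, hf⟩ := geometric_hahn_banach_open_point
    ((convex_convexHull ℝ (P : Set Pt)).interior) isOpen_interior hx
  refine ⟨f.toLinearMap, ?_, hf u hu⟩
  intro z hzK
  show f z ≤ f x
  by_contra hgt
  push_neg at hgt
  have hfu : f u < f x := hf u hu
  set ε := (f z - f x) / (f z - f u) with hεdef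
  have h1 : (0:ℝ) < f z - f x := by linarith
  have h2 : f z - f x < f z - f u := by linarith
  have hε1 : 0 < ε := div_pos h1 (by linarith)
  have hε2 : ε < 1 := (div_lt_one (by linarith)).2 h2
  have hmem : ε • u + (1 - ε) • z ∈ interior (convexHull ℝ (P : Set Pt)) :=
    (convex_convexHull ℝ (P : Set Pt)).combo_interior_closure_mem_interior hu
      (by rw [(P.finite_toSet.isClosed_convexHull ℝ).closure_eq]; exact hzK)
      hε1 (by linarith) (by ring)
  have hlt := hf _ hmem
  simp only [map_add, map_smul, smul_eq_mul] at hlt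
  have key : ε * (f z - f u) = f z - f x := by
    rw [hεdef, div_mul_eq_mul_div, mul_div_assoc,
      div_self (by linarith : f z - f u ≠ 0), mul_one]
  have expand : ε * f u + (1 - ε) * f z = f z - ε * (f z - f u) := by ring
  linarith
structure Ambient (P : Finset Pt) (o w : Pt) : Prop where
  hgp : GenPos P
  hoP : o ∈ P
  hwP : w ∈ P
  how : o ≠ w
  hoB : o ∉ hullB P
  hwB : w ∉ hullB P
  hsplit : ∀ p ∈ P, p = o ∨ p = w ∨ p ∈ hullB P

structure SideData (P : Finset Pt) (G : Pt →ₗ[ℝ] ℝ) (o w : Pt) where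
  a : Pt
  b : Pt
  x : Pt
  t : ℝ
  lam : ℝ
  h : Pt →ₗ[ℝ] ℝ
  haB : a ∈ hullB P
  hbB : b ∈ hullB P
  hxdef : x = o + t • (o - w)
  ht : 0 < t
  hxab : x = lam • a + (1 - lam) • b
  hl0 : 0 < lam
  hl1 : lam < 1
  hGw : G w = G o
  hGa : G o < G a
  hGb : G b < G o
  hh : ∀ p ∈ convexHull ℝ (P : Set Pt), h p ≤ h x
  hho : h o < h x

namespace SideData

variable {P : Finset Pt} {G : Pt →ₗ[ℝ] ℝ} {o w : Pt}

lemma haP (sd : SideData P G o w) : sd.a ∈ P := hullB_subset P sd.haB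
lemma hbP (sd : SideData P G o w) : sd.b ∈ P := hullB_subset P sd.hbB

lemma hao (sd : SideData P G o w) (am : Ambient P o w) : sd.a ≠ o :=
  fun h => am.hoB (h ▸ sd.haB)
lemma hbo (sd : SideData P G o w) (am : Ambient P o w) : sd.b ≠ o :=
  fun h => am.hoB (h ▸ sd.hbB)
lemma haw (sd : SideData P G o w) (am : Ambient P o w) : sd.a ≠ w :=
  fun h => am.hwB (h ▸ sd.haB)
lemma hbw (sd : SideData P G o w) (am : Ambient P o w) : sd.b ≠ w :=
  fun h => am.hwB (h ▸ sd.hbB)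
lemma hab (sd : SideData P G o w) : sd.a ≠ sd.b := by
  intro h
  have h1 := sd.hGa
  rw [h] at h1
  linarith [sd.hGb]

lemma hGx (sd : SideData P G o w) : G sd.x = G o := by
  have h1 := congrArg G sd.hxdef
  simp only [map_add, map_smul, map_sub, smul_eq_mul] at h1
  rw [h1, sd.hGw]
  ring

lemma hκ (sd : SideData P G o w) (am : Ambient P o w) :
    crossL (sd.a - o) (sd.x - o) ≠ 0 := by
  have hxo : sd.x - o = sd.t • (o - w) := by rw [sd.hxdef]; module
  rw [hxo, map_smul, smul_eq_mul]
  intro hcon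
  have h0 : crossL (sd.a - o) (o - w) = 0 := by
    rcases mul_eq_zero.1 hcon with h | h
    · exact absurd h sd.ht.ne'
    · exact h
  have h1 : crossL (sd.a - o) (w - o) = 0 := by
    rw [show w - o = -(o - w) by module, map_neg, h0, neg_zero]
  have hcol : Collinear ℝ ({o, sd.a, w} : Set Pt) :=
    collinear_of_crossL (sub_ne_zero.2 (sd.hao am)) h1
  exact am.hgp o am.hoP sd.a sd.haP w am.hwP (sd.hao am).symm (sd.haw am) am.how hcol

noncomputable def A (sd : SideData P G o w) : Pt →ₗ[ℝ] ℝ :=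
  (crossL (sd.a - o) (sd.x - o))⁻¹ • crossL (sd.a - o)

lemma A_apply (sd : SideData P G o w) (z : Pt) :
    sd.A z = (crossL (sd.a - o) (sd.x - o))⁻¹ * crossL (sd.a - o) z := rfl

lemma A_diff (sd : SideData P G o w) (z : Pt) :
    sd.A z - sd.A o = (crossL (sd.a - o) (sd.x - o))⁻¹ * crossL (sd.a - o) (z - o) := by
  simp only [A_apply, map_sub]
  ring

lemma hAx (sd : SideData P G o w) (am : Ambient P o w) : sd.A sd.x - sd.A o = 1 := by
  rw [A_diff, inv_mul_cancel₀ (sd.hκ am)]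

lemma hAa (sd : SideData P G o w) : sd.A sd.a = sd.A o := by
  have := sd.A_diff sd.a
  rw [crossL_self, mul_zero] at this
  linarith

lemma hκb (sd : SideData P G o w) :
    crossL (sd.a - o) (sd.x - o) = (1 - sd.lam) * crossL (sd.a - o) (sd.b - o) := by
  have hxab' : sd.x - o = sd.lam • (sd.a - o) + (1 - sd.lam) • (sd.b - o) := by
    rw [sd.hxab]; module
  rw [hxab', map_add, map_smul, map_smul, crossL_self, smul_eq_mul, smul_eq_mul,
    mul_zero, zero_add]

lemma hAb (sd : SideData P G o w) (am : Ambient P o w) :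
    sd.A sd.b - sd.A o = (1 - sd.lam)⁻¹ := by
  have hκ := sd.hκ am
  have hκb := sd.hκb
  have hcb : crossL (sd.a - o) (sd.b - o) ≠ 0 := by
    intro h; rw [hκb, h, mul_zero] at hκ; exact hκ rfl
  rw [A_diff, hκb, mul_inv, mul_assoc, inv_mul_cancel₀ hcb, mul_one]

lemma hAb_pos (sd : SideData P G o w) (am : Ambient P o w) : sd.A o < sd.A sd.b := by
  have h1 := sd.hAb am
  have h2 : (0:ℝ) < (1 - sd.lam)⁻¹ := inv_pos.2 (by linarith [sd.hl1])
  linarith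

lemma hAw (sd : SideData P G o w) (am : Ambient P o w) :
    sd.A w - sd.A o = -sd.t⁻¹ := by
  have h1 : sd.A sd.x - sd.A o = 1 := sd.hAx am
  have h2 := congrArg sd.A sd.hxdef
  simp only [map_add, map_smul, map_sub, smul_eq_mul] at h2
  have ht := sd.ht
  have h3 : sd.t * (sd.A o - sd.A w) = 1 := by linarith
  have h4 : sd.A o - sd.A w = sd.t⁻¹ := by
    field_simp at h3 ⊢
    linarith
  linarith

lemma hAw_neg (sd : SideData P G o w) (am : Ambient P o w) : sd.A w < sd.A o := by
  have h1 := sd.hAw am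
  have h2 : (0:ℝ) < sd.t⁻¹ := inv_pos.2 sd.ht
  linarith

lemma hhab (sd : SideData P G o w) :
    sd.h sd.a = sd.h sd.x ∧ sd.h sd.b = sd.h sd.x := by
  have hax : sd.h sd.a ≤ sd.h sd.x := sd.hh _ (subset_convexHull _ _ sd.haP)
  have hbx : sd.h sd.b ≤ sd.h sd.x := sd.hh _ (subset_convexHull _ _ sd.hbP)
  have hcomb := congrArg sd.h sd.hxab
  simp only [map_add, map_smul, smul_eq_mul] at hcomb
  constructor
  · nlinarith [sd.hl0, sd.hl1]
  · nlinarith [sd.hl0, sd.hl1]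

lemma score (sd : SideData P G o w) (am : Ambient P o w) {z : Pt}
    (hz : z ∈ convexHull ℝ (P : Set Pt)) (hGz : G o ≤ G z) (hAz : sd.A o ≤ sd.A z) :
    z ∈ convexHull ℝ ({o, sd.a, sd.b} : Set Pt) := by
  have hκ := sd.hκ am
  have hGane : G sd.a - G o ≠ 0 := by have := sd.hGa; intro h; linarith [sub_eq_zero.1 h]
  set p0 := (G z - G o) / (G sd.a - G o) with hp0def
  set q0 := sd.A z - sd.A o with hq0def
  have hp0 : 0 ≤ p0 := div_nonneg (by linarith) (by linarith [sd.hGa])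
  have hq0 : 0 ≤ q0 := by rw [hq0def]; linarith
  have hdec : z - o = p0 • (sd.a - o) + q0 • (sd.x - o) := by
    set r := z - o - p0 • (sd.a - o) - q0 • (sd.x - o) with hrdef
    have hGr : G r = 0 := by
      have h1 := congrArg G hrdef
      simp only [map_sub, map_smul, smul_eq_mul] at h1
      rw [h1, sd.hGx, hp0def]
      field_simp
      ring
    have hAr : crossL (sd.a - o) r = 0 := by
      have e1 : crossL (sd.a - o) sd.a - crossL (sd.a - o) o = 0 := by
        rw [← map_sub, crossL_self]
      have e4 := sd.A_diff z
      rw [hrdef]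
      simp only [map_sub, map_smul, smul_eq_mul]
      have hκ' : crossL (sd.a - o) sd.x - crossL (sd.a - o) o ≠ 0 := by
        rw [← map_sub]; exact hκ
      rw [e1, mul_zero, sub_zero, ← map_sub, ← map_sub, hq0def, e4, map_sub, map_sub,
        mul_assoc, inv_mul_eq_div, mul_div_assoc, div_self hκ', mul_one, sub_self]
    have hr0 : r = 0 := by
      have hd2 := decompose hκ r
      have hc2 : crossL (sd.a - o) r / crossL (sd.a - o) (sd.x - o) = 0 := by
        rw [hAr, zero_div]
      have hGd2 := congrArg G hd2
      rw [map_add, map_smul, map_smul, smul_eq_mul, smul_eq_mul] at hGd2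
      have hGxo : G (sd.x - o) = 0 := by rw [map_sub, sd.hGx, sub_self]
      have hGao : G (sd.a - o) = G sd.a - G o := map_sub _ _ _
      rw [hGxo, mul_zero, add_zero, hGr, hGao] at hGd2
      have hc1 : crossL (sd.x - o) r / crossL (sd.x - o) (sd.a - o) = 0 := by
        rcases mul_eq_zero.1 hGd2.symm with h | h
        · exact h
        · exact absurd h hGane
      rw [hc1, hc2, zero_smul, zero_smul, add_zero] at hd2
      exact hd2
    have h6 : z - o - p0 • (sd.a - o) - q0 • (sd.x - o) = 0 := hr0
    have h7 : (z - o) - (p0 • (sd.a - o) + q0 • (sd.x - o)) = 0 := by rw [← h6]; module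
    have := sub_eq_zero.1 h7
    exact this
  set s := p0 + q0 * sd.lam with hsdef
  set t' := q0 * (1 - sd.lam) with ht'def
  have hzdec : z - o = s • (sd.a - o) + t' • (sd.b - o) := by
    have hxab' : sd.x - o = sd.lam • (sd.a - o) + (1 - sd.lam) • (sd.b - o) := by
      rw [sd.hxab]; module
    rw [hdec, hxab', hsdef, ht'def]
    module
  have hs : 0 ≤ s := by
    have h8 : 0 ≤ q0 * sd.lam := mul_nonneg hq0 sd.hl0.le
    rw [hsdef]; linarith
  have ht'0 : 0 ≤ t' := by
    have h8 : (0:ℝ) ≤ 1 - sd.lam := by linarith [sd.hl1]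
    rw [ht'def]; positivity
  obtain ⟨hha, hhb⟩ := sd.hhab
  have hzh : sd.h z ≤ sd.h sd.x := sd.hh z hz
  have hhz : sd.h z - sd.h o = (s + t') * (sd.h sd.x - sd.h o) := by
    have h7 := congrArg sd.h hzdec
    simp only [map_sub, map_add, map_smul, smul_eq_mul] at h7
    rw [hha, hhb] at h7
    linarith [h7]
  have hst : s + t' ≤ 1 := by
    have hpos : 0 < sd.h sd.x - sd.h o := by linarith [sd.hho]
    nlinarith
  refine combo3 hs ht'0 hst ?_
  have h8 : z = o + (z - o) := by module
  rw [hzdec] at h8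
  exact h8.trans (by module)

lemma tri_halfplane (sd : SideData P G o w) (am : Ambient P o w) :
    convexHull ℝ ({o, sd.a, sd.b} : Set Pt) ⊆ {z | sd.A o ≤ sd.A z} := by
  apply convexHull_min
  · rintro z (rfl | rfl | rfl)
    · simp
    · rw [mem_setOf_eq, sd.hAa]
    · rw [mem_setOf_eq]; exact (sd.hAb_pos am).le
  · intro z₁ hz₁ z₂ hz₂ c₁ c₂ hc₁ hc₂ hc
    rw [mem_setOf_eq] at hz₁ hz₂ ⊢
    have h1 : sd.A (c₁ • z₁ + c₂ • z₂) = c₁ * sd.A z₁ + c₂ * sd.A z₂ := by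
      rw [map_add, map_smul, map_smul, smul_eq_mul, smul_eq_mul]
    rw [h1]
    have k1 := mul_le_mul_of_nonneg_left hz₁ hc₁
    have k2 := mul_le_mul_of_nonneg_left hz₂ hc₂
    have k3 : sd.A o = c₁ * sd.A o + c₂ * sd.A o := by rw [← add_mul, hc, one_mul]
    linarith

lemma A_neg (sd : SideData P G o w) (am : Ambient P o w) {p : Pt}
    (hpP : p ∈ P) (hpo : p ≠ o) (hpw : p ≠ w) (hpa : p ≠ sd.a)
    (hGp : G o ≤ G p) : sd.A p < sd.A o := by
  rcases lt_trichotomy (sd.A p) (sd.A o) with h | h | h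
  · exact h
  · exfalso
    have hcr : crossL (sd.a - o) (p - o) = 0 := by
      have h1 := sd.A_diff p
      rw [h, sub_self] at h1
      rcases mul_eq_zero.1 h1.symm with h5 | h5
      · exact absurd h5 (inv_ne_zero (sd.hκ am))
      · exact h5
    have hcol : Collinear ℝ ({o, sd.a, p} : Set Pt) :=
      collinear_of_crossL (sub_ne_zero.2 (sd.hao am)) hcr
    exact am.hgp o am.hoP sd.a sd.haP p hpP (sd.hao am).symm (Ne.symm hpa) (Ne.symm hpo) hcol
  · exfalso
    have hmem := sd.score am (subset_convexHull _ _ hpP) hGp h.le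
    have hpb : p ≠ sd.b := by
      intro h5
      rw [h5] at hGp
      linarith [sd.hGb]
    have hpB : p ∈ hullB P := by
      rcases am.hsplit p hpP with h5 | h5 | h5
      · exact absurd h5 hpo
      · exact absurd h5 hpw
      · exact h5
    have hsub : ({o, sd.a, sd.b} : Set Pt) ⊆ (P : Set Pt) \ {p} := by
      rintro z (rfl | rfl | rfl)
      · exact ⟨am.hoP, by simp [Ne.symm hpo]⟩
      · exact ⟨sd.haP, by simp [Ne.symm hpa]⟩
      · exact ⟨sd.hbP, by simp [Ne.symm hpb]⟩
    exact (mem_hullB_iff.1 hpB).2 (convexHull_mono hsub hmem)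

lemma exit_seg (sd : SideData P G o w) (am : Ambient P o w) {z : Pt}
    (hz : z ∈ convexHull ℝ (P : Set Pt)) (hA0 : sd.A z = sd.A o)
    (hGz : G o ≤ G z) : z ∈ segment ℝ o sd.a := by
  have hcr : crossL (sd.a - o) (z - o) = 0 := by
    have h1 := sd.A_diff z
    rw [hA0, sub_self] at h1
    rcases mul_eq_zero.1 h1.symm with h5 | h5
    · exact absurd h5 (inv_ne_zero (sd.hκ am))
    · exact h5
  obtain ⟨c, hc⟩ := eq_smul_of_crossL_eq_zero (sub_ne_zero.2 (sd.hao am)) hcr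
  have hc0 : 0 ≤ c := by
    have h5 := congrArg G hc
    simp only [map_sub, map_smul, smul_eq_mul] at h5
    by_contra h6
    push_neg at h6
    nlinarith [sd.hGa]
  have hc1 : c ≤ 1 := by
    by_contra h6
    push_neg at h6
    have hoc : o ∈ convexHull ℝ ((P : Set Pt) \ {sd.a}) :=
      subset_convexHull _ _ ⟨am.hoP, by simp [Ne.symm (sd.hao am)]⟩
    have h7 := exit_ray sd.haB hoc h6
    have hzeq : o + c • (sd.a - o) = z := by rw [← hc]; module
    rw [hzeq] at h7
    exact h7 hz
  refine ⟨1 - c, c, by linarith, hc0, by ring, ?_⟩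
  rw [show z = o + (z - o) by module, hc]
  module

lemma tcut (sd : SideData P G o w) {z : Pt}
    (hz : z ∈ convexHull ℝ ({o, sd.a, sd.b} : Set Pt)) (hGz : G o ≤ G z) :
    ∃ μ₁ μ₂ μ₃ : ℝ, 0 ≤ μ₁ ∧ 0 ≤ μ₂ ∧ 0 ≤ μ₃ ∧ μ₁ + μ₂ + μ₃ = 1 ∧
      z = μ₁ • o + μ₂ • sd.a + μ₃ • sd.x := by
  obtain ⟨s, t', hs, ht', hst, hzeq⟩ := combo3' hz
  have hlne : (0:ℝ) < 1 - sd.lam := by linarith [sd.hl1]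
  have hGz' : G z - G o = s * (G sd.a - G o) + t' * (G sd.b - G o) := by
    have h6 := congrArg G hzeq
    simp only [map_add, map_sub, map_smul, smul_eq_mul] at h6
    linarith [h6]
  have hGrel : G sd.b - G o = -(sd.lam / (1 - sd.lam)) * (G sd.a - G o) := by
    have h5 := congrArg G sd.hxab
    simp only [map_add, map_smul, smul_eq_mul] at h5
    have h6 := sd.hGx
    field_simp
    nlinarith [h5, h6]
  set μ₂ := s - t' * sd.lam / (1 - sd.lam) with hμ₂def
  set μ₃ := t' / (1 - sd.lam) with hμ₃def
  have hμ₂ : 0 ≤ μ₂ := by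
    have h7 : G z - G o = μ₂ * (G sd.a - G o) := by
      rw [hGz', hGrel, hμ₂def]; field_simp; ring
    by_contra h9
    push_neg at h9
    nlinarith [sd.hGa, hGz]
  have hμ₃ : 0 ≤ μ₃ := by rw [hμ₃def]; positivity
  refine ⟨1 - s - t', μ₂, μ₃, by linarith, hμ₂, hμ₃,
    by rw [hμ₂def, hμ₃def]; field_simp; ring, ?_⟩
  rw [hzeq, sd.hxab, hμ₂def, hμ₃def]
  match_scalars <;> field_simp <;> ring

end SideData
lemma genpos_cross {P : Finset Pt} (hgp : GenPos P) :
    ∀ p q r : Pt, p ∈ (P : Set Pt) → q ∈ (P : Set Pt) → r ∈ (P : Set Pt) →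
      p ≠ q → q ≠ r → p ≠ r → crossL (q - p) (r - p) ≠ 0 := by
  intro p q r hp hq hr hpq hqr hpr hcr
  exact hgp p hp q hq r hr hpq hqr hpr
    (collinear_of_crossL (sub_ne_zero.2 (Ne.symm hpq)) hcr)

lemma cross_construct {P : Finset Pt} {G : Pt →ₗ[ℝ] ℝ} {o w : Pt} (am : Ambient P o w)
    (hoI : o ∈ interior (convexHull ℝ (P : Set Pt)))
    (hGw : G w = G o) (hGnz : ∀ p : Pt, p ∈ P → p ≠ o → p ≠ w → G p ≠ G o) :
    ∃ (sd : SideData P G o w) (sd' : SideData P (-G) o w),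
      sd'.x = sd.x ∧ sd'.a = sd.b ∧ sd'.b = sd.a := by
  have hd : o - w ≠ 0 := sub_ne_zero.2 am.how
  obtain ⟨t, ht, hxK, hxNI⟩ := maxray (o - w) hd hoI
  set x := o + t • (o - w) with hxdef
  obtain ⟨h, hh, hho⟩ := support_at hoI hxNI
  have hxo : x - o = t • (o - w) := by rw [hxdef]; module
  have hxne_o : x ≠ o := by
    intro hcon
    rw [hcon, sub_self] at hxo
    rcases smul_eq_zero.1 hxo.symm with h5 | h5
    · exact ht.ne' h5
    · exact hd h5
  have hxne_w : x ≠ w := by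
    intro hcon
    have h6 : x - w = (1 + t) • (o - w) := by rw [hxdef]; module
    rw [hcon, sub_self] at h6
    rcases smul_eq_zero.1 h6.symm with h5 | h5
    · linarith
    · exact hd h5
  have hGx : G x = G o := by
    have h1 := congrArg G hxdef
    simp only [map_add, map_smul, map_sub, smul_eq_mul] at h1
    rw [h1, hGw]; ring
  rcases cara (genpos_cross am.hgp) hxK with hxP | hmid | hint
  · exact absurd hGx (hGnz x hxP hxne_o hxne_w)
  swap
  · exact absurd hint hxNI
  obtain ⟨p, hpP, q, hqP, hpq, hxp, hxq, a', b', ha', hb', hab', hxeq⟩ := hmid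
  have hpP' : p ∈ P := hpP
  have hqP' : q ∈ P := hqP
  have keyG : ∀ y₁ y₂ : Pt, G y₁ = G o → ∀ c₁ c₂ : ℝ, 0 < c₂ → c₁ + c₂ = 1 →
      x = c₁ • y₁ + c₂ • y₂ → G y₂ = G o := by
    intro y₁ y₂ hGy₁ c₁ c₂ hc₂ hc hxe
    have h1 := congrArg G hxe
    simp only [map_add, map_smul, smul_eq_mul] at h1
    rw [hGx, hGy₁] at h1
    have h2 : c₂ * G y₂ = c₂ * G o := by linear_combination -h1 - G o * hc
    exact mul_left_cancel₀ hc₂.ne' h2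
  have keyOW : ∀ c₁ c₂ : ℝ, 0 < c₂ → c₁ + c₂ = 1 → ¬ (x = c₁ • o + c₂ • w) := by
    intro c₁ c₂ hc₂ hc hxe
    have h0 : (t + c₂) • (o - w) = (o + t • (o - w)) - (c₁ • o + c₂ • w) := by
      rw [show c₁ = 1 - c₂ by linarith]
      module
    rw [← hxdef, ← hxe, sub_self] at h0
    rcases smul_eq_zero.1 h0 with h5 | h5
    · nlinarith
    · exact hd h5
  have hpo : p ≠ o := by
    intro hcon
    rw [hcon] at hxeq
    have hGq := keyG o q rfl a' b' hb' hab' hxeq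
    rcases eq_or_ne q w with hqw | hqw
    · rw [hqw] at hxeq
      exact keyOW a' b' hb' hab' hxeq
    · exact hGnz q hqP' (fun h5 => hpq (hcon.trans h5.symm)) hqw hGq
  have hpw : p ≠ w := by
    intro hcon
    rw [hcon] at hxeq
    have hGq := keyG w q hGw a' b' hb' hab' hxeq
    rcases eq_or_ne q o with hqo | hqo
    · rw [hqo] at hxeq
      refine keyOW b' a' ha' (by linarith) ?_
      rw [hxeq]; module
    · exact hGnz q hqP' hqo (fun h5 => hpq (hcon.trans h5.symm)) hGq
  have hqo : q ≠ o := by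
    intro hcon
    rw [hcon] at hxeq
    have hx2 : x = b' • o + a' • p := by rw [hxeq]; module
    have hGp := keyG o p rfl b' a' ha' (by linarith) hx2
    rcases eq_or_ne p w with hpw2 | hpw2
    · rw [hpw2] at hx2
      exact keyOW b' a' ha' (by linarith) hx2
    · exact hGnz p hpP' (fun h5 => hpq (h5.trans hcon.symm)) hpw2 hGp
  have hqw : q ≠ w := by
    intro hcon
    rw [hcon] at hxeq
    have hx2 : x = b' • w + a' • p := by rw [hxeq]; module
    have hGp := keyG w p hGw b' a' ha' (by linarith) hx2
    rcases eq_or_ne p o with hpo2 | hpo2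
    · rw [hpo2] at hx2
      refine keyOW a' b' hb' hab' ?_
      rw [hx2]; module
    · exact hGnz p hpP' hpo2 (fun h5 => hpq (h5.trans hcon.symm)) hGp
  have hpB : p ∈ hullB P := by
    rcases am.hsplit p hpP' with h5 | h5 | h5
    · exact absurd h5 hpo
    · exact absurd h5 hpw
    · exact h5
  have hqB : q ∈ hullB P := by
    rcases am.hsplit q hqP' with h5 | h5 | h5
    · exact absurd h5 hqo
    · exact absurd h5 hqw
    · exact h5
  have hsum0 : a' * (G p - G o) + b' * (G q - G o) = 0 := by
    have h1 := congrArg G hxeq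
    simp only [map_add, map_smul, smul_eq_mul] at h1
    rw [hGx] at h1
    linear_combination -h1 - G o * hab'
  have hGp_ne : G p ≠ G o := hGnz p hpP' hpo hpw
  have hGq_ne : G q ≠ G o := hGnz q hqP' hqo hqw
  rcases lt_or_gt_of_ne hGp_ne with hGp | hGp
  · -- G p < G o, so G q > G o : a := q, b := p
    have hGq : G o < G q := by
      rcases lt_or_gt_of_ne hGq_ne with h5 | h5
      · exfalso; nlinarith
      · exact h5
    refine ⟨⟨q, p, x, t, b', h, hqB, hpB, hxdef, ht, ?_, hb', by linarith, hGw, hGq, hGp, hh, hho⟩,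
      ⟨p, q, x, t, a', h, hpB, hqB, hxdef, ht, ?_, ha', by linarith, ?_, ?_, ?_, hh, hho⟩,
      rfl, rfl, rfl⟩
    · rw [hxeq, show (1:ℝ) - b' = a' by linarith]; module
    · rw [hxeq, show (1:ℝ) - a' = b' by linarith]
    · simp only [LinearMap.neg_apply, hGw]
    · simp only [LinearMap.neg_apply]; linarith
    · simp only [LinearMap.neg_apply]; linarith
  · -- G p > G o : a := p, b := q
    have hGq : G q < G o := by
      rcases lt_or_gt_of_ne hGq_ne with h5 | h5
      · exact h5
      · exfalso; nlinarith
    refine ⟨⟨p, q, x, t, a', h, hpB, hqB, hxdef, ht, ?_, ha', by linarith, hGw, hGp, hGq, hh, hho⟩,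
      ⟨q, p, x, t, b', h, hqB, hpB, hxdef, ht, ?_, hb', by linarith, ?_, ?_, ?_, hh, hho⟩,
      rfl, rfl, rfl⟩
    · rw [hxeq, show (1:ℝ) - a' = b' by linarith]
    · rw [hxeq, show (1:ℝ) - b' = a' by linarith]; module
    · simp only [LinearMap.neg_apply, hGw]
    · simp only [LinearMap.neg_apply]; linarith
    · simp only [LinearMap.neg_apply]; linarith
lemma int_mem_interior {P : Finset Pt} (hgp : GenPos P) {u : Pt} (huP : u ∈ P)
    (huB : u ∉ hullB P) : u ∈ interior (convexHull ℝ (P : Set Pt)) := by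
  have huC : u ∈ convexHull ℝ ((P : Set Pt) \ {u}) := by
    by_contra hc
    exact huB (mem_hullB_iff.2 ⟨huP, hc⟩)
  have hnc : ∀ p q r : Pt, p ∈ (P : Set Pt) \ {u} → q ∈ (P : Set Pt) \ {u} →
      r ∈ (P : Set Pt) \ {u} → p ≠ q → q ≠ r → p ≠ r → crossL (q - p) (r - p) ≠ 0 :=
    fun p q r hp hq hr h1 h2 h3 => genpos_cross hgp p q r hp.1 hq.1 hr.1 h1 h2 h3
  rcases cara hnc huC with h | h | h
  · exact absurd h (by simp)
  · exfalso
    obtain ⟨p, hpS, q, hqS, hpq, hup, huq, a, b, ha, hb, hab, hueq⟩ := h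
    have hcr : crossL (q - p) (u - p) = 0 := by
      have h6 : u - p = b • (q - p) := by
        rw [hueq, show a = 1 - b by linarith]; module
      rw [h6, map_smul, smul_eq_mul, crossL_self, mul_zero]
    exact hgp p hpS.1 q hqS.1 u huP hpq (Ne.symm huq) (Ne.symm hup)
      (collinear_of_crossL (sub_ne_zero.2 (Ne.symm hpq)) hcr)
  · exact interior_mono (convexHull_mono diff_subset) h

lemma disj_half {f : Pt →ₗ[ℝ] ℝ} {wit : Pt} (hwit : f wit ≠ 0) {cc : ℝ} {s1 s2 : Set Pt}
    (h1 : s1 ⊆ {z | f z ≤ cc}) (h2 : s2 ⊆ {z | cc ≤ f z}) :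
    interior s1 ∩ interior s2 = ∅ := by
  ext z
  simp only [mem_inter_iff, mem_empty_iff_false, iff_false, not_and]
  intro hz1 hz2
  have ha := mem_interior_lt hwit h1 hz1
  have hb : (-f) z < -cc := by
    refine mem_interior_lt (f := -f) (w := wit) (by simpa using hwit) ?_ hz2
    intro y hy
    have := h2 hy
    simp only [mem_setOf_eq, LinearMap.neg_apply] at this ⊢
    linarith
  simp only [LinearMap.neg_apply] at hb
  linarith

/-- interiors of a set and itself with disjoint interiors + nonempty interior give distinctness -/
lemma ne_of_disj_interior {s1 s2 : Set Pt} (hd : interior s1 ∩ interior s2 = ∅)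
    (hne : (interior s1).Nonempty) : s1 ≠ s2 := by
  intro h
  rw [h, inter_self] at hd
  rw [h, hd] at hne
  exact not_nonempty_empty hne

lemma mem_interior_gt {f : Pt →ₗ[ℝ] ℝ} {w : Pt} (hw : f w ≠ 0) {c : ℝ} {s : Set Pt}
    (hs : s ⊆ {z | c ≤ f z}) {z : Pt} (hz : z ∈ interior s) : c < f z := by
  have h := mem_interior_lt (f := -f) (w := w) (by simpa using hw) (c := -c) (s := s)
    (fun y hy => by
      simp only [mem_setOf_eq, LinearMap.neg_apply]
      exact neg_le_neg (hs hy)) hz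
  simp only [LinearMap.neg_apply] at h
  linarith

set_option maxHeartbeats 4000000 in
/-- If `P` is in general position with exactly two interior points, then `P` admits a
convex decomposition with exactly 4 polygons, so `u(P) ≤ 4 ≤ (4/3)·2 + (1/3)|B(P)| + 1`. -/
theorem two_interior_points (P : Finset Pt) (hgp : GenPos P)
    (hi : (intI P).card = 2) :
    (∃ D : Finset (Set Pt), IsConvexDecomp P D ∧ D.card = 4) ∧
    uMin P ≤ 4 ∧ (4 : ℝ) ≤ 4 / 3 * 2 + 1 / 3 * (hullB P).card + 1 := by
  classical
  obtain ⟨u, v, huv, hI⟩ := Finset.card_eq_two.1 hi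
  have huI' : u ∈ intI P := by rw [hI]; simp
  have hvI' : v ∈ intI P := by rw [hI]; simp
  have huP : u ∈ P := (Finset.mem_sdiff.1 huI').1
  have hvP : v ∈ P := (Finset.mem_sdiff.1 hvI').1
  have huB : u ∉ hullB P := (Finset.mem_sdiff.1 huI').2
  have hvB : v ∉ hullB P := (Finset.mem_sdiff.1 hvI').2
  have hsplit : ∀ p ∈ P, p = u ∨ p = v ∨ p ∈ hullB P := by
    intro p hp
    by_cases hb : p ∈ hullB P
    · exact Or.inr (Or.inr hb)
    · have h1 : p ∈ intI P := Finset.mem_sdiff.2 ⟨hp, hb⟩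
      rw [hI] at h1
      simp only [Finset.mem_insert, Finset.mem_singleton] at h1
      tauto
  have hsplit' : ∀ p ∈ P, p = v ∨ p = u ∨ p ∈ hullB P := by
    intro p hp; rcases hsplit p hp with h | h | h <;> tauto
  have amU : Ambient P u v := ⟨hgp, huP, hvP, huv, huB, hvB, hsplit⟩
  have amV : Ambient P v u := ⟨hgp, hvP, huP, huv.symm, hvB, huB, hsplit'⟩
  have huInt : u ∈ interior (convexHull ℝ (P : Set Pt)) := int_mem_interior hgp huP huB
  have hvInt : v ∈ interior (convexHull ℝ (P : Set Pt)) := int_mem_interior hgp hvP hvB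
  have hvu : v - u ≠ 0 := sub_ne_zero.2 (Ne.symm huv)
  have hGvu : crossL (v - u) v = crossL (v - u) u := by
    have h1 : crossL (v - u) v - crossL (v - u) u = 0 := by
      rw [← map_sub, crossL_self]
    linarith
  have hGnz : ∀ p : Pt, p ∈ P → p ≠ u → p ≠ v → crossL (v - u) p ≠ crossL (v - u) u := by
    intro p hp hpu hpv hc
    have hcr : crossL (v - u) (p - u) = 0 := by rw [map_sub, hc, sub_self]
    exact hgp u huP v hvP p hp huv (Ne.symm hpv) (Ne.symm hpu)
      (collinear_of_crossL hvu hcr)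
  have hGnz' : ∀ p : Pt, p ∈ P → p ≠ v → p ≠ u → crossL (v - u) p ≠ crossL (v - u) v := by
    intro p hp hpv hpu
    rw [hGvu]
    exact hGnz p hp hpu hpv
  obtain ⟨sd1, sd1', hx1, ha1, hb1⟩ := cross_construct amU huInt hGvu hGnz
  obtain ⟨sd2, sd2', hx2, ha2, hb2⟩ := cross_construct amV hvInt hGvu.symm hGnz'
  have hAvu : sd1.A v < sd1.A u := sd1.hAw_neg amU
  have hBvu : sd1'.A v < sd1'.A u := sd1'.hAw_neg amU
  have hCuv : sd2.A u < sd2.A v := sd2.hAw_neg amV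
  have hDuv : sd2'.A u < sd2'.A v := sd2'.hAw_neg amV
  have hGa1 : crossL (v-u) u < crossL (v-u) sd1.a := sd1.hGa
  have hGb1 : crossL (v-u) sd1.b < crossL (v-u) u := sd1.hGb
  have hGc : crossL (v-u) u < crossL (v-u) sd2.a := by
    have h5 := sd2.hGa
    rwa [hGvu] at h5
  have hGd : crossL (v-u) sd2.b < crossL (v-u) u := by
    have h5 := sd2.hGb
    rwa [hGvu] at h5
  have hAc : sd1.A sd2.a ≤ sd1.A u := by
    rcases eq_or_ne sd2.a sd1.a with h | h
    · rw [h, sd1.hAa]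
    · exact (sd1.A_neg amU sd2.haP (sd2.haw amV) (sd2.hao amV) h hGc.le).le
  have hAy : sd1.A sd2.x < sd1.A u := by
    have h1 := congrArg sd1.A sd2.hxdef
    simp only [map_add, map_smul, map_sub, smul_eq_mul] at h1
    have h2 : sd2.t * (sd1.A v - sd1.A u) < 0 :=
      mul_neg_of_pos_of_neg sd2.ht (by linarith)
    linarith
  have hBd : sd1'.A sd2'.a ≤ sd1'.A u := by
    rcases eq_or_ne sd2'.a sd1'.a with h | h
    · rw [h, sd1'.hAa]
    · refine (sd1'.A_neg amU sd2'.haP (sd2'.haw amV) (sd2'.hao amV) h ?_).le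
      have h5 := sd2'.hGa
      simp only [LinearMap.neg_apply] at h5 ⊢
      linarith [hGvu]
  have hBy : sd1'.A sd2'.x < sd1'.A u := by
    have h1 := congrArg sd1'.A sd2'.hxdef
    simp only [map_add, map_smul, map_sub, smul_eq_mul] at h1
    have h2 : sd2'.t * (sd1'.A v - sd1'.A u) < 0 :=
      mul_neg_of_pos_of_neg sd2'.ht (by linarith)
    linarith

  have hseg_gen : ∀ (F F' : Pt →ₗ[ℝ] ℝ), F v < F u → F' u < F' v →
      ∀ z : Pt, crossL (v-u) z = crossL (v-u) u →
      F z ≤ F u → F' z ≤ F' v → z ∈ segment ℝ u v := by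
    intro F F' hF hF' z hGz hAz hCz
    have hcr : crossL (v - u) (z - u) = 0 := by rw [map_sub, hGz, sub_self]
    obtain ⟨r, hr⟩ := eq_smul_of_crossL_eq_zero hvu hcr
    have hzeq : z = u + r • (v - u) := by rw [show z = u + (z - u) by module, hr]
    have hAr := congrArg F hzeq
    simp only [map_add, map_smul, map_sub, smul_eq_mul] at hAr
    have hr0 : 0 ≤ r := by nlinarith [hAr, hAz, hF]
    have hCr := congrArg F' hzeq
    simp only [map_add, map_smul, map_sub, smul_eq_mul] at hCr
    have hr1 : r ≤ 1 := by nlinarith [hCr, hCz, hF']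
    exact ⟨1 - r, r, by linarith, hr0, by ring, by rw [hzeq]; module⟩
  set V₁ : Finset Pt :=
    insert u (insert v (P.filter (fun p => crossL (v-u) u < crossL (v-u) p))) with hV₁def
  set V₂ : Finset Pt :=
    insert u (insert v (P.filter (fun p => crossL (v-u) p < crossL (v-u) u))) with hV₂def
  have hV₁P : V₁ ⊆ P := by
    intro z hz
    rw [hV₁def] at hz
    simp only [Finset.mem_insert, Finset.mem_filter] at hz
    rcases hz with rfl | rfl | hz
    · exact huP
    · exact hvP
    · exact hz.1
  have hV₂P : V₂ ⊆ P := by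
    intro z hz
    rw [hV₂def] at hz
    simp only [Finset.mem_insert, Finset.mem_filter] at hz
    rcases hz with rfl | rfl | hz
    · exact huP
    · exact hvP
    · exact hz.1
  have huV₁ : u ∈ V₁ := by rw [hV₁def]; simp
  have hvV₁ : v ∈ V₁ := by rw [hV₁def]; simp
  have haV₁ : sd1.a ∈ V₁ := by
    rw [hV₁def]
    simp only [Finset.mem_insert, Finset.mem_filter]
    exact Or.inr (Or.inr ⟨sd1.haP, hGa1⟩)
  have hcV₁ : sd2.a ∈ V₁ := by
    rw [hV₁def]
    simp only [Finset.mem_insert, Finset.mem_filter]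
    exact Or.inr (Or.inr ⟨sd2.haP, hGc⟩)
  have huV₂ : u ∈ V₂ := by rw [hV₂def]; simp
  have hvV₂ : v ∈ V₂ := by rw [hV₂def]; simp
  have hbV₂ : sd1.b ∈ V₂ := by
    rw [hV₂def]
    simp only [Finset.mem_insert, Finset.mem_filter]
    exact Or.inr (Or.inr ⟨sd1.hbP, hGb1⟩)
  have hdV₂ : sd2.b ∈ V₂ := by
    rw [hV₂def]
    simp only [Finset.mem_insert, Finset.mem_filter]
    exact Or.inr (Or.inr ⟨sd2.hbP, hGd⟩)
  have hsegsub : ∀ (p q : Pt) (W : Finset Pt), p ∈ W → q ∈ W →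
      segment ℝ p q ⊆ convexHull ℝ (W : Set Pt) := by
    intro p q W hp hq
    rw [← convexHull_pair]
    apply convexHull_mono
    rintro s (rfl | rfl)
    · exact hp
    · exact hq
  have hQ1R : ((convexHull ℝ (P : Set Pt) ∩ {z | (-(crossL (v-u))) z ≤ (-(crossL (v-u))) u})
      ∩ {z | sd1.A z ≤ sd1.A u}) ∩ {z | sd2.A z ≤ sd2.A v}
      = convexHull ℝ (V₁ : Set Pt) := by
    apply polyCut
    · intro q hq
      rw [hV₁def] at hq
      simp only [Finset.mem_insert, Finset.mem_filter] at hq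
      rcases hq with rfl | rfl | ⟨hqP, hqG⟩
      · exact ⟨huP, le_refl _, le_refl _, hCuv.le⟩
      · refine ⟨hvP, ?_, hAvu.le, le_refl _⟩
        simp only [LinearMap.neg_apply]
        linarith [hGvu]
      · have hqu : q ≠ u := by rintro rfl; exact lt_irrefl _ hqG
        have hqv : q ≠ v := by rintro rfl; rw [hGvu] at hqG; exact lt_irrefl _ hqG
        refine ⟨hqP, ?_, ?_, ?_⟩
        · simp only [LinearMap.neg_apply]; linarith
        · rcases eq_or_ne q sd1.a with h | h
          · rw [h, sd1.hAa]
          · exact (sd1.A_neg amU hqP hqu hqv h hqG.le).le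
        · rcases eq_or_ne q sd2.a with h | h
          · rw [h, sd2.hAa]
          · refine (sd2.A_neg amV hqP hqv hqu h ?_).le
            rw [hGvu]; exact hqG.le
    · intro z hz h1 h2 h3
      have hzP : z ∈ (P : Set Pt) := extremePoints_convexHull_subset hz
      apply subset_convexHull
      simp only [LinearMap.neg_apply] at h1
      rcases hsplit z hzP with rfl | rfl | hzB
      · exact huV₁
      · exact hvV₁
      · have hzu : z ≠ u := fun h => huB (h ▸ hzB)
        have hzv : z ≠ v := fun h => hvB (h ▸ hzB)
        have hGlt : crossL (v-u) u < crossL (v-u) z :=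
          lt_of_le_of_ne (by linarith) (Ne.symm (hGnz z hzP hzu hzv))
        rw [hV₁def]
        simp only [Finset.coe_insert, Set.mem_insert_iff, Finset.mem_coe, Finset.mem_filter]
        exact Or.inr (Or.inr ⟨hzP, hGlt⟩)
    · intro z hzK hf1 hf2 hf3
      simp only [LinearMap.neg_apply] at hf1
      exact hsegsub u v V₁ huV₁ hvV₁
        (hseg_gen sd1.A sd2.A hAvu hCuv z (by linarith) hf2 hf3)
    · intro z hzK hf2 hf1 hf3
      simp only [LinearMap.neg_apply] at hf1
      exact hsegsub u sd1.a V₁ huV₁ haV₁ (sd1.exit_seg amU hzK hf2 (by linarith))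
    · intro z hzK hf3 hf1 hf2
      simp only [LinearMap.neg_apply] at hf1
      refine hsegsub v sd2.a V₁ hvV₁ hcV₁ (sd2.exit_seg amV hzK hf3 ?_)
      rw [hGvu]; linarith
  have hQ2R : ((convexHull ℝ (P : Set Pt) ∩ {z | (crossL (v-u)) z ≤ (crossL (v-u)) u})
      ∩ {z | sd1'.A z ≤ sd1'.A u}) ∩ {z | sd2'.A z ≤ sd2'.A v}
      = convexHull ℝ (V₂ : Set Pt) := by
    apply polyCut
    · intro q hq
      rw [hV₂def] at hq
      simp only [Finset.mem_insert, Finset.mem_filter] at hq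
      rcases hq with rfl | rfl | ⟨hqP, hqG⟩
      · exact ⟨huP, le_refl _, le_refl _, hDuv.le⟩
      · exact ⟨hvP, le_of_eq hGvu, hBvu.le, le_refl _⟩
      · have hqu : q ≠ u := by rintro rfl; exact lt_irrefl _ hqG
        have hqv : q ≠ v := by rintro rfl; rw [hGvu] at hqG; exact lt_irrefl _ hqG
        refine ⟨hqP, hqG.le, ?_, ?_⟩
        · rcases eq_or_ne q sd1'.a with h | h
          · rw [h, sd1'.hAa]
          · refine (sd1'.A_neg amU hqP hqu hqv h ?_).le
            simp only [LinearMap.neg_apply]; linarith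
        · rcases eq_or_ne q sd2'.a with h | h
          · rw [h, sd2'.hAa]
          · refine (sd2'.A_neg amV hqP hqv hqu h ?_).le
            simp only [LinearMap.neg_apply]; linarith [hGvu]
    · intro z hz h1 h2 h3
      have hzP : z ∈ (P : Set Pt) := extremePoints_convexHull_subset hz
      apply subset_convexHull
      rcases hsplit z hzP with rfl | rfl | hzB
      · exact huV₂
      · exact hvV₂
      · have hzu : z ≠ u := fun h => huB (h ▸ hzB)
        have hzv : z ≠ v := fun h => hvB (h ▸ hzB)
        have hGlt : crossL (v-u) z < crossL (v-u) u :=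
          lt_of_le_of_ne h1 (hGnz z hzP hzu hzv)
        rw [hV₂def]
        simp only [Finset.coe_insert, Set.mem_insert_iff, Finset.mem_coe, Finset.mem_filter]
        exact Or.inr (Or.inr ⟨hzP, hGlt⟩)
    · intro z hzK hf1 hf2 hf3
      exact hsegsub u v V₂ huV₂ hvV₂
        (hseg_gen sd1'.A sd2'.A hBvu hDuv z (by linarith) hf2 hf3)
    · intro z hzK hf2 hf1 hf3
      refine hsegsub u sd1'.a V₂ huV₂ ?_ (sd1'.exit_seg amU hzK hf2 ?_)
      · rw [ha1]; exact hbV₂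
      · simp only [LinearMap.neg_apply]; linarith
    · intro z hzK hf3 hf1 hf2
      refine hsegsub v sd2'.a V₂ hvV₂ ?_ (sd2'.exit_seg amV hzK hf3 ?_)
      · rw [ha2]; exact hdV₂
      · simp only [LinearMap.neg_apply]; linarith [hGvu]
  set T1 := convexHull ℝ ({u, sd1.a, sd1.b} : Set Pt) with hT1def
  set T2 := convexHull ℝ ({v, sd2.a, sd2.b} : Set Pt) with hT2def
  set Q1 := convexHull ℝ (V₁ : Set Pt) with hQ1def
  set Q2 := convexHull ℝ (V₂ : Set Pt) with hQ2def
  have hT1alt : convexHull ℝ ({u, sd1'.a, sd1'.b} : Set Pt) = T1 := by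
    rw [ha1, hb1, hT1def]
    have hsets : ({u, sd1.b, sd1.a} : Set Pt) = {u, sd1.a, sd1.b} := by
      ext z; simp; tauto
    rw [hsets]
  have hT2alt : convexHull ℝ ({v, sd2'.a, sd2'.b} : Set Pt) = T2 := by
    rw [ha2, hb2, hT2def]
    have hsets : ({v, sd2.b, sd2.a} : Set Pt) = {v, sd2.a, sd2.b} := by
      ext z; simp; tauto
    rw [hsets]
  have hQ1G : Q1 ⊆ {z | crossL (v-u) u ≤ crossL (v-u) z} := by
    intro z hz
    rw [← hQ1R] at hz
    have h5 := hz.1.1.2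
    simp only [LinearMap.neg_apply, mem_setOf_eq] at h5 ⊢
    linarith
  have hQ1A : Q1 ⊆ {z | sd1.A z ≤ sd1.A u} := fun z hz => by
    rw [← hQ1R] at hz; exact hz.1.2
  have hQ1C : Q1 ⊆ {z | sd2.A z ≤ sd2.A v} := fun z hz => by
    rw [← hQ1R] at hz; exact hz.2
  have hQ2G : Q2 ⊆ {z | crossL (v-u) z ≤ crossL (v-u) u} := fun z hz => by
    rw [← hQ2R] at hz; exact hz.1.1.2
  have hQ2B : Q2 ⊆ {z | sd1'.A z ≤ sd1'.A u} := fun z hz => by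
    rw [← hQ2R] at hz; exact hz.1.2
  have hQ2D : Q2 ⊆ {z | sd2'.A z ≤ sd2'.A v} := fun z hz => by
    rw [← hQ2R] at hz; exact hz.2
  have hT1A : T1 ⊆ {z | sd1.A u ≤ sd1.A z} := sd1.tri_halfplane amU
  have hT1B : T1 ⊆ {z | sd1'.A u ≤ sd1'.A z} := by
    rw [← hT1alt]; exact sd1'.tri_halfplane amU
  have hT2C : T2 ⊆ {z | sd2.A v ≤ sd2.A z} := sd2.tri_halfplane amV
  have hT2D : T2 ⊆ {z | sd2'.A v ≤ sd2'.A z} := by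
    rw [← hT2alt]; exact sd2'.tri_halfplane amV
  have hGwit : crossL (v-u) (-(v-u).2, (v-u).1) ≠ 0 := crossL_perp _ hvu
  have hAwit : sd1.A (sd1.x - u) ≠ 0 := by
    rw [map_sub, sd1.hAx amU]; norm_num
  have hBwit : sd1'.A (sd1'.x - u) ≠ 0 := by
    rw [map_sub, sd1'.hAx amU]; norm_num
  have hCwit : sd2.A (sd2.x - v) ≠ 0 := by
    rw [map_sub, sd2.hAx amV]; norm_num
  have hDwit : sd2'.A (sd2'.x - v) ≠ 0 := by
    rw [map_sub, sd2'.hAx amV]; norm_num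
  have hdQ1Q2 : interior Q1 ∩ interior Q2 = ∅ := by
    rw [inter_comm]; exact disj_half hGwit hQ2G hQ1G
  have hdQ1T1 : interior Q1 ∩ interior T1 = ∅ := disj_half hAwit hQ1A hT1A
  have hdQ1T2 : interior Q1 ∩ interior T2 = ∅ := disj_half hCwit hQ1C hT2C
  have hdQ2T1 : interior Q2 ∩ interior T1 = ∅ := disj_half hBwit hQ2B hT1B
  have hdQ2T2 : interior Q2 ∩ interior T2 = ∅ := disj_half hDwit hQ2D hT2D
  have hdT1T2 : interior T1 ∩ interior T2 = ∅ := by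
    by_contra hne
    obtain ⟨z₀, hz₀⟩ := Set.nonempty_iff_ne_empty.2 hne
    have hopen : IsOpen (interior T1 ∩ interior T2) := isOpen_interior.inter isOpen_interior
    have hzG : ∃ z ∈ interior T1 ∩ interior T2,
        crossL (v-u) z ≠ crossL (v-u) u := by
      by_contra hall
      push_neg at hall
      have hsub2 : interior T1 ∩ interior T2 ⊆ {z | crossL (v-u) z ≤ crossL (v-u) u} :=
        fun z hz => le_of_eq (hall z hz)
      have h5 := mem_interior_lt hGwit hsub2 (by rw [hopen.interior_eq]; exact hz₀)
      rw [hall z₀ hz₀] at h5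
      exact lt_irrefl _ h5
    obtain ⟨z, ⟨hzT1, hzT2⟩, hzGne⟩ := hzG
    rcases lt_or_gt_of_ne hzGne with hlt | hgt
    · have hzT2' : z ∈ convexHull ℝ ({v, sd2'.a, sd2'.b} : Set Pt) := by
        rw [hT2alt]; exact interior_subset hzT2
      obtain ⟨μ₁, μ₂, μ₃, hμ₁, hμ₂, hμ₃, hμsum, hzeq⟩ := sd2'.tcut hzT2'
        (by simp only [LinearMap.neg_apply]; linarith [hGvu])
      have hBz := congrArg sd1'.A hzeq
      simp only [map_add, map_smul, smul_eq_mul] at hBz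
      have k1 : μ₁ * sd1'.A v ≤ μ₁ * sd1'.A u := mul_le_mul_of_nonneg_left hBvu.le hμ₁
      have k2 : μ₂ * sd1'.A sd2'.a ≤ μ₂ * sd1'.A u := mul_le_mul_of_nonneg_left hBd hμ₂
      have k3 : μ₃ * sd1'.A sd2'.x ≤ μ₃ * sd1'.A u := mul_le_mul_of_nonneg_left hBy.le hμ₃
      have ksum : μ₁ * sd1'.A u + μ₂ * sd1'.A u + μ₃ * sd1'.A u = sd1'.A u := by
        rw [← add_mul, ← add_mul, hμsum, one_mul]
      have h6 := mem_interior_gt hBwit hT1B hzT1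
      linarith
    · have hzT2'' : z ∈ convexHull ℝ ({v, sd2.a, sd2.b} : Set Pt) := interior_subset hzT2
      obtain ⟨μ₁, μ₂, μ₃, hμ₁, hμ₂, hμ₃, hμsum, hzeq⟩ := sd2.tcut hzT2''
        (by rw [hGvu]; exact hgt.le)
      have hAz := congrArg sd1.A hzeq
      simp only [map_add, map_smul, smul_eq_mul] at hAz
      have k1 : μ₁ * sd1.A v ≤ μ₁ * sd1.A u := mul_le_mul_of_nonneg_left hAvu.le hμ₁
      have k2 : μ₂ * sd1.A sd2.a ≤ μ₂ * sd1.A u := mul_le_mul_of_nonneg_left hAc hμ₂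
      have k3 : μ₃ * sd1.A sd2.x ≤ μ₃ * sd1.A u := mul_le_mul_of_nonneg_left hAy.le hμ₃
      have ksum : μ₁ * sd1.A u + μ₂ * sd1.A u + μ₃ * sd1.A u = sd1.A u := by
        rw [← add_mul, ← add_mul, hμsum, one_mul]
      have h6 := mem_interior_gt hAwit hT1A hzT1
      linarith
  have hUnion : ∀ z ∈ convexHull ℝ (P : Set Pt), z ∈ T1 ∨ z ∈ T2 ∨ z ∈ Q1 ∨ z ∈ Q2 := by
    intro z hzK
    by_cases hG : crossL (v-u) u ≤ crossL (v-u) z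
    · by_cases hA : sd1.A z ≤ sd1.A u
      · by_cases hC : sd2.A z ≤ sd2.A v
        · right; right; left
          rw [← hQ1R]
          exact ⟨⟨⟨hzK, by simp only [LinearMap.neg_apply, mem_setOf_eq]; linarith⟩, hA⟩, hC⟩
        · right; left
          push_neg at hC
          exact sd2.score amV hzK (by rw [hGvu]; exact hG) hC.le
      · left
        push_neg at hA
        exact sd1.score amU hzK hG hA.le
    · push_neg at hG
      by_cases hB : sd1'.A z ≤ sd1'.A u
      · by_cases hD : sd2'.A z ≤ sd2'.A v
        · right; right; right
          rw [← hQ2R]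
          exact ⟨⟨⟨hzK, hG.le⟩, hB⟩, hD⟩
        · right; left
          push_neg at hD
          rw [← hT2alt]
          exact sd2'.score amV hzK
            (by simp only [LinearMap.neg_apply]; linarith [hGvu]) hD.le
      · left
        push_neg at hB
        rw [← hT1alt]
        exact sd1'.score amU hzK (by simp only [LinearMap.neg_apply]; linarith) hB.le
  have hnoT1 : ∀ q ∈ P, (q : Pt) ∉ interior T1 := by
    intro q hq hqint
    rcases hsplit q hq with rfl | rfl | hqB
    · exact lt_irrefl _ (mem_interior_gt hAwit hT1A hqint)
    · have h5 := mem_interior_gt hAwit hT1A hqint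
      linarith
    · have hmem := mem_convexHull_diff (by rw [hT1def] at hqint; exact hqint)
      have hsub : ({u, sd1.a, sd1.b} : Set Pt) \ {q} ⊆ (P : Set Pt) \ {q} := by
        intro s hs
        refine ⟨?_, hs.2⟩
        rcases hs.1 with rfl | rfl | rfl
        exacts [huP, sd1.haP, sd1.hbP]
      exact (mem_hullB_iff.1 hqB).2 (convexHull_mono hsub hmem)
  have hnoT2 : ∀ q ∈ P, (q : Pt) ∉ interior T2 := by
    intro q hq hqint
    rcases hsplit q hq with rfl | rfl | hqB
    · have h5 := mem_interior_gt hCwit hT2C hqint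
      linarith
    · exact lt_irrefl _ (mem_interior_gt hCwit hT2C hqint)
    · have hmem := mem_convexHull_diff (by rw [hT2def] at hqint; exact hqint)
      have hsub : ({v, sd2.a, sd2.b} : Set Pt) \ {q} ⊆ (P : Set Pt) \ {q} := by
        intro s hs
        refine ⟨?_, hs.2⟩
        rcases hs.1 with rfl | rfl | rfl
        exacts [hvP, sd2.haP, sd2.hbP]
      exact (mem_hullB_iff.1 hqB).2 (convexHull_mono hsub hmem)
  have hnoQ1 : ∀ q ∈ P, (q : Pt) ∉ interior Q1 := by
    intro q hq hqint
    rcases hsplit q hq with rfl | rfl | hqB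
    · exact lt_irrefl _ (mem_interior_gt hGwit hQ1G hqint)
    · have h5 := mem_interior_gt hGwit hQ1G hqint
      rw [hGvu] at h5
      exact lt_irrefl _ h5
    · have hmem := mem_convexHull_diff (by rw [hQ1def] at hqint; exact hqint)
      have hsub : (V₁ : Set Pt) \ {q} ⊆ (P : Set Pt) \ {q} :=
        fun s hs => ⟨Finset.coe_subset.2 hV₁P hs.1, hs.2⟩
      exact (mem_hullB_iff.1 hqB).2 (convexHull_mono hsub hmem)
  have hnoQ2 : ∀ q ∈ P, (q : Pt) ∉ interior Q2 := by
    intro q hq hqint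
    rcases hsplit q hq with rfl | rfl | hqB
    · have h5 := mem_interior_lt hGwit hQ2G hqint
      exact lt_irrefl _ h5
    · have h5 := mem_interior_lt hGwit hQ2G hqint
      rw [hGvu] at h5
      exact lt_irrefl _ h5
    · have hmem := mem_convexHull_diff (by rw [hQ2def] at hqint; exact hqint)
      have hsub : (V₂ : Set Pt) \ {q} ⊆ (P : Set Pt) \ {q} :=
        fun s hs => ⟨Finset.coe_subset.2 hV₂P hs.1, hs.2⟩
      exact (mem_hullB_iff.1 hqB).2 (convexHull_mono hsub hmem)
  have hT1K : T1 ⊆ convexHull ℝ (P : Set Pt) := by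
    rw [hT1def]
    apply convexHull_mono
    rintro s (rfl | rfl | rfl)
    exacts [huP, sd1.haP, sd1.hbP]
  have hT2K : T2 ⊆ convexHull ℝ (P : Set Pt) := by
    rw [hT2def]
    apply convexHull_mono
    rintro s (rfl | rfl | rfl)
    exacts [hvP, sd2.haP, sd2.hbP]
  have hQ1K : Q1 ⊆ convexHull ℝ (P : Set Pt) := by
    rw [hQ1def]
    exact convexHull_mono (Finset.coe_subset.2 hV₁P)
  have hQ2K : Q2 ⊆ convexHull ℝ (P : Set Pt) := by
    rw [hQ2def]
    exact convexHull_mono (Finset.coe_subset.2 hV₂P)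
  have hneT1 : (interior T1).Nonempty := by
    rw [hT1def]
    exact interior_triangle_nonempty (genpos_cross hgp u sd1.a sd1.b huP sd1.haP sd1.hbP
      (Ne.symm (sd1.hao amU)) sd1.hab (Ne.symm (sd1.hbo amU)))
  have hneT2 : (interior T2).Nonempty := by
    rw [hT2def]
    exact interior_triangle_nonempty (genpos_cross hgp v sd2.a sd2.b hvP sd2.haP sd2.hbP
      (Ne.symm (sd2.hao amV)) sd2.hab (Ne.symm (sd2.hbo amV)))
  have hneQ1 : (interior Q1).Nonempty := by
    have h1 : convexHull ℝ ({u, sd1.a, v} : Set Pt) ⊆ Q1 := by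
      rw [hQ1def]
      apply convexHull_mono
      rintro s (rfl | rfl | rfl)
      exacts [huV₁, haV₁, hvV₁]
    obtain ⟨z, hz⟩ := interior_triangle_nonempty (genpos_cross hgp u sd1.a v huP sd1.haP hvP
      (Ne.symm (sd1.hao amU)) (sd1.haw amU) huv)
    exact ⟨z, interior_mono h1 hz⟩
  have hneQ2 : (interior Q2).Nonempty := by
    have h1 : convexHull ℝ ({u, sd1.b, v} : Set Pt) ⊆ Q2 := by
      rw [hQ2def]
      apply convexHull_mono
      rintro s (rfl | rfl | rfl)
      exacts [huV₂, hbV₂, hvV₂]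
    obtain ⟨z, hz⟩ := interior_triangle_nonempty (genpos_cross hgp u sd1.b v huP sd1.hbP hvP
      (Ne.symm (sd1.hbo amU)) (sd1.hbw amU) huv)
    exact ⟨z, interior_mono h1 hz⟩
  set D : Finset (Set Pt) := {T1, T2, Q1, Q2} with hDdef
  have hT1T2ne : T1 ≠ T2 := ne_of_disj_interior hdT1T2 hneT1
  have hT1Q1ne : T1 ≠ Q1 := ne_of_disj_interior (by rw [inter_comm]; exact hdQ1T1) hneT1
  have hT1Q2ne : T1 ≠ Q2 := ne_of_disj_interior (by rw [inter_comm]; exact hdQ2T1) hneT1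
  have hT2Q1ne : T2 ≠ Q1 := ne_of_disj_interior (by rw [inter_comm]; exact hdQ1T2) hneT2
  have hT2Q2ne : T2 ≠ Q2 := ne_of_disj_interior (by rw [inter_comm]; exact hdQ2T2) hneT2
  have hQ1Q2ne : Q1 ≠ Q2 := ne_of_disj_interior hdQ1Q2 hneQ1
  have hmemD : ∀ C ∈ D, C = T1 ∨ C = T2 ∨ C = Q1 ∨ C = Q2 := by
    intro C hC
    rw [hDdef] at hC
    simp only [Finset.mem_insert, Finset.mem_singleton] at hC
    tauto
  have hDcard : D.card = 4 := by
    rw [hDdef]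
    rw [Finset.card_insert_of_notMem (by simp [hT1T2ne, hT1Q1ne, hT1Q2ne]),
        Finset.card_insert_of_notMem (by simp [hT2Q1ne, hT2Q2ne]),
        Finset.card_insert_of_notMem (by simp [hQ1Q2ne]),
        Finset.card_singleton]
  have hpoly : ∀ C ∈ D, IsPolygonOn P C := by
    intro C hC
    rcases hmemD C hC with rfl | rfl | rfl | rfl
    · refine ⟨{u, sd1.a, sd1.b}, ?_, ?_, by rw [hT1def]; simp⟩
      · intro s hs
        simp only [Finset.mem_insert, Finset.mem_singleton] at hs
        rcases hs with rfl | rfl | rfl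
        exacts [huP, sd1.haP, sd1.hbP]
      · rw [Finset.card_insert_of_notMem (by
          simp [Ne.symm (sd1.hao amU), Ne.symm (sd1.hbo amU)]),
          Finset.card_insert_of_notMem (by simp [sd1.hab]), Finset.card_singleton]
    · refine ⟨{v, sd2.a, sd2.b}, ?_, ?_, by rw [hT2def]; simp⟩
      · intro s hs
        simp only [Finset.mem_insert, Finset.mem_singleton] at hs
        rcases hs with rfl | rfl | rfl
        exacts [hvP, sd2.haP, sd2.hbP]
      · rw [Finset.card_insert_of_notMem (by
          simp [Ne.symm (sd2.hao amV), Ne.symm (sd2.hbo amV)]),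
          Finset.card_insert_of_notMem (by simp [sd2.hab]), Finset.card_singleton]
    · refine ⟨V₁, hV₁P, ?_, hQ1def⟩
      have hsub : ({u, v, sd1.a} : Finset Pt) ⊆ V₁ := by
        intro s hs
        simp only [Finset.mem_insert, Finset.mem_singleton] at hs
        rcases hs with rfl | rfl | rfl
        exacts [huV₁, hvV₁, haV₁]
      have hc3 : ({u, v, sd1.a} : Finset Pt).card = 3 := by
        rw [Finset.card_insert_of_notMem (by simp [huv, Ne.symm (sd1.hao amU)]),
          Finset.card_insert_of_notMem (by simp [Ne.symm (sd1.haw amU)]),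
          Finset.card_singleton]
      calc 3 = ({u, v, sd1.a} : Finset Pt).card := hc3.symm
        _ ≤ V₁.card := Finset.card_le_card hsub
    · refine ⟨V₂, hV₂P, ?_, hQ2def⟩
      have hsub : ({u, v, sd1.b} : Finset Pt) ⊆ V₂ := by
        intro s hs
        simp only [Finset.mem_insert, Finset.mem_singleton] at hs
        rcases hs with rfl | rfl | rfl
        exacts [huV₂, hvV₂, hbV₂]
      have hc3 : ({u, v, sd1.b} : Finset Pt).card = 3 := by
        rw [Finset.card_insert_of_notMem (by simp [huv, Ne.symm (sd1.hbo amU)]),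
          Finset.card_insert_of_notMem (by simp [Ne.symm (sd1.hbw amU)]),
          Finset.card_singleton]
      calc 3 = ({u, v, sd1.b} : Finset Pt).card := hc3.symm
        _ ≤ V₂.card := Finset.card_le_card hsub
  have hsymm : ∀ s t : Set Pt, interior s ∩ interior t = ∅ → interior t ∩ interior s = ∅ :=
    fun s t h => by rw [inter_comm]; exact h
  have hpair : ∀ C ∈ D, ∀ C' ∈ D, C ≠ C' → interior C ∩ interior C' = ∅ := by
    intro C hC C' hC' hne
    rcases hmemD C hC with rfl | rfl | rfl | rfl <;>
      rcases hmemD C' hC' with rfl | rfl | rfl | rfl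
    all_goals first
      | exact absurd rfl hne
      | exact hdT1T2
      | exact hsymm _ _ hdT1T2
      | exact hdQ1T1
      | exact hsymm _ _ hdQ1T1
      | exact hdQ1T2
      | exact hsymm _ _ hdQ1T2
      | exact hdQ2T1
      | exact hsymm _ _ hdQ2T1
      | exact hdQ2T2
      | exact hsymm _ _ hdQ2T2
      | exact hdQ1Q2
      | exact hsymm _ _ hdQ1Q2
  have hT1D : T1 ∈ D := by rw [hDdef]; simp
  have hT2D : T2 ∈ D := by rw [hDdef]; simp
  have hQ1D : Q1 ∈ D := by rw [hDdef]; simp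
  have hQ2D : Q2 ∈ D := by rw [hDdef]; simp
  have hunion : (⋃ C ∈ D, C) = convexHull ℝ (P : Set Pt) := by
    apply Set.Subset.antisymm
    · apply Set.iUnion₂_subset
      intro C hC
      rcases hmemD C hC with rfl | rfl | rfl | rfl
      exacts [hT1K, hT2K, hQ1K, hQ2K]
    · intro z hz
      rcases hUnion z hz with h | h | h | h
      · exact Set.mem_biUnion hT1D h
      · exact Set.mem_biUnion hT2D h
      · exact Set.mem_biUnion hQ1D h
      · exact Set.mem_biUnion hQ2D h
  have hnop : ∀ C ∈ D, ∀ p ∈ P, (p : Pt) ∉ interior C := by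
    intro C hC p hp
    rcases hmemD C hC with rfl | rfl | rfl | rfl
    exacts [hnoT1 p hp, hnoT2 p hp, hnoQ1 p hp, hnoQ2 p hp]
  have hdecomp : IsConvexDecomp P D := ⟨hpoly, hpair, hunion, hnop⟩
  refine ⟨⟨D, hdecomp, hDcard⟩, ?_, ?_⟩
  · exact Nat.sInf_le ⟨D, hdecomp, hDcard⟩
  · have h1 : (1:ℝ) ≤ (hullB P).card := by
      have h2 : 0 < (hullB P).card := Finset.card_pos.2 ⟨sd1.a, sd1.haB⟩
      exact_mod_cast h2
    linarith
end

section
/- Let P be a finite point set in general position in the plane, p a vertex of the convex hull of P with hull-neighbors p⁻ and p⁺ such that the interior of triangle p⁻ p p⁺ contains no point of P. Then every point of P \ {p} that was an interior point of P is still an interior point of P \ {p}; i.e., B(P \ {p}) = (B(P) \ {p}). -/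
private lemma finrank_Pt : Module.finrank ℝ Pt = 2 := by
  simp [Pt, Module.finrank_prod]

private lemma collinear_of_fiber (f : Pt →L[ℝ] ℝ) (u v : Pt) (huv : f v < f u)
    (a b c : Pt) (hab : f a = f b) (hac : f a = f c) :
    Collinear ℝ ({a, b, c} : Set Pt) := by
  set g := (f : Pt →ₗ[ℝ] ℝ) with hg
  have hval : ∀ w ∈ ({a, b, c} : Set Pt), g w = g a := by
    rintro w (rfl | rfl | rfl)
    · rfl
    · exact hab.symm
    · exact hac.symm
  have hker : vectorSpan ℝ ({a, b, c} : Set Pt) ≤ LinearMap.ker g := by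
    rw [vectorSpan_def, Submodule.span_le]
    rintro w ⟨u', hu', v', hv', rfl⟩
    simp only [SetLike.mem_coe, LinearMap.mem_ker, vsub_eq_sub, map_sub]
    rw [hval u' hu', hval v' hv', sub_self]
  have hkt : LinearMap.ker g ≠ ⊤ := by
    intro h
    have h1 : u - v ∈ LinearMap.ker g := h ▸ Submodule.mem_top
    rw [LinearMap.mem_ker, map_sub] at h1
    have : g u = g v := by linarith [sub_eq_zero.mp h1]
    exact absurd this (by simpa [hg] using huv.ne')
  have hfr : Module.finrank ℝ (LinearMap.ker g) ≤ 1 := by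
    by_contra hgt
    push_neg at hgt
    have hle2 : Module.finrank ℝ (LinearMap.ker g) ≤ 2 := finrank_Pt ▸ Submodule.finrank_le _
    have heq : Module.finrank ℝ (LinearMap.ker g) = Module.finrank ℝ Pt := by
      rw [finrank_Pt]; omega
    exact hkt (Submodule.eq_top_of_finrank_eq heq)
  rw [collinear_iff_finrank_le_one]
  exact le_trans (Submodule.finrank_mono hker) hfr

private lemma exists_support (P : Finset Pt) (hgp : GenPos P) (a b : Pt) (hE : IsHullEdge P a b)
    (hint : (interior (convexHull ℝ (P : Set Pt))).Nonempty) :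
    ∃ f : Pt →L[ℝ] ℝ, (∃ u v : Pt, f v < f u) ∧ f a = f b ∧ (∀ r ∈ P, f r ≤ f a) ∧
      (∀ r ∈ P, r ≠ a → r ≠ b → f r < f a) := by
  obtain ⟨haB, hbB, hab, hseg⟩ := hE
  classical
  rw [hullB, Finset.mem_filter] at haB hbB
  have haP : a ∈ P := haB.1
  have hbP : b ∈ P := hbB.1
  set m := midpoint ℝ a b with hm
  have hmf : m ∈ frontier (convexHull ℝ (P : Set Pt)) := hseg (midpoint_mem_segment a b)
  have hmi : m ∉ interior (convexHull ℝ (P : Set Pt)) := hmf.2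
  obtain ⟨f, hf⟩ := geometric_hahn_banach_open_point
    ((convex_convexHull ℝ _).interior) isOpen_interior hmi
  obtain ⟨z, hz⟩ := hint
  have hzm : f z < f m := hf z hz
  have hle : ∀ y ∈ convexHull ℝ (P : Set Pt), f y ≤ f m := by
    intro y hy
    by_contra hgt
    push_neg at hgt
    have hd0 : (0:ℝ) < f y - f z := by linarith
    set t := min 1 ((f y - f m) / (2 * (f y - f z))) with ht
    have ht0 : 0 < t := lt_min one_pos (div_pos (by linarith) (by linarith))
    have ht1 : t ≤ 1 := min_le_left _ _
    have hw : t • z + (1 - t) • y ∈ interior (convexHull ℝ (P : Set Pt)) :=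
      (convex_convexHull ℝ _).combo_interior_self_mem_interior hz hy ht0 (by linarith) (by ring)
    have hlt := hf _ hw
    rw [map_add, map_smul, map_smul, smul_eq_mul, smul_eq_mul] at hlt
    have htr : t ≤ (f y - f m) / (2 * (f y - f z)) := min_le_right _ _
    have htd : t * (f y - f z) ≤ (f y - f m) / 2 := by
      calc t * (f y - f z) ≤ ((f y - f m) / (2 * (f y - f z))) * (f y - f z) := by nlinarith
        _ = (f y - f m) / 2 := by field_simp
    nlinarith
  have ham : f a ≤ f m := hle a (subset_convexHull ℝ _ haP)
  have hbm : f b ≤ f m := hle b (subset_convexHull ℝ _ hbP)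
  have hm2 : f m = (f a + f b) / 2 := by
    rw [hm, midpoint_eq_smul_add, map_smul, map_add, smul_eq_mul, invOf_eq_inv]
    ring
  have hfa : f a = f m := by linarith
  have hfb : f b = f m := by linarith
  refine ⟨f, ⟨m, z, hzm⟩, by linarith, fun r hr => by linarith [hle r (subset_convexHull ℝ _ hr)], ?_⟩
  intro r hr hra hrb
  rcases lt_or_eq_of_le (hle r (subset_convexHull ℝ _ hr)) with h | h
  · linarith
  · exfalso
    have hcol : Collinear ℝ ({a, b, r} : Set Pt) :=
      collinear_of_fiber f m z hzm a b r (by linarith) (by linarith)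
    exact hgp a haP b hbP r hr hab (fun h' => hrb h'.symm) (fun h' => hra h'.symm) hcol

private lemma interior_step (P : Finset Pt) (hgp : GenPos P) (pm p pp : Pt)
    (h1 : IsHullEdge P pm p) (h2 : IsHullEdge P p pp) (hne : pm ≠ pp)
    (hempty : interior (convexHull ℝ ({pm, p, pp} : Set Pt)) ∩ (P : Set Pt) = ∅)
    (x : Pt) (hxP : x ∈ P) (hxp : x ≠ p)
    (hx : x ∈ convexHull ℝ ((P : Set Pt) \ {x})) :
    x ∈ convexHull ℝ (((P : Set Pt) \ {p}) \ {x}) := by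
  classical
  by_contra hcon
  have hpmp : pm ≠ p := h1.2.2.1
  have hppp : p ≠ pp := h2.2.2.1
  have hpmB := h1.1
  have hpB := h1.2.1
  have hppB := h2.2.1
  rw [hullB, Finset.mem_filter] at hpmB hpB hppB
  have hpmP : pm ∈ P := hpmB.1
  have hpP : p ∈ P := hpB.1
  have hppP : pp ∈ P := hppB.1
  have hxpm : x ≠ pm := by rintro rfl; exact hpmB.2 hx
  have hxpp : x ≠ pp := by rintro rfl; exact hppB.2 hx
  have ncol : ¬ Collinear ℝ ({pm, p, pp} : Set Pt) := hgp pm hpmP p hpP pp hppP hpmp hppp hne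
  have hind : AffineIndependent ℝ ![pm, p, pp] := affineIndependent_iff_not_collinear_set.mpr ncol
  have htop : affineSpan ℝ (Set.range ![pm, p, pp]) = ⊤ :=
    hind.affineSpan_eq_top_iff_card_eq_finrank_add_one.mpr (by simp [finrank_Pt])
  set b : AffineBasis (Fin 3) ℝ Pt := ⟨![pm, p, pp], hind, htop⟩ with hbdef
  have hrange : Set.range ⇑b = ({pm, p, pp} : Set Pt) := by
    show Set.range ![pm, p, pp] = _
    ext y
    constructor
    · rintro ⟨i, rfl⟩; fin_cases i <;> simp
    · rintro (rfl | rfl | rfl)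
      exacts [⟨0, rfl⟩, ⟨1, rfl⟩, ⟨2, rfl⟩]
  have hintne : (interior (convexHull ℝ (P : Set Pt))).Nonempty := by
    rw [interior_convexHull_nonempty_iff_affineSpan_eq_top, eq_top_iff, ← htop]
    apply affineSpan_mono
    rintro y ⟨i, rfl⟩
    fin_cases i
    · exact hpmP
    · exact hpP
    · exact hppP
  obtain ⟨f1, _, h1ab, h1le, h1lt⟩ := exists_support P hgp pm p h1 hintne
  obtain ⟨f2, _, h2ab, h2le, h2lt⟩ := exists_support P hgp p pp h2 hintne
  -- separating functional for x from P \ {p, x}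
  set s0 : Set Pt := ((P : Set Pt) \ {p}) \ {x} with hs0
  have hs0fin : s0.Finite := P.finite_toSet.diff.diff
  obtain ⟨g, u, hgu, hgb⟩ := geometric_hahn_banach_point_closed
    (convex_convexHull ℝ s0) (hs0fin.isCompact_convexHull ℝ).isClosed hcon
  have hsep : ∀ r ∈ P, r ≠ p → r ≠ x → g x < g r := by
    intro r hr hrp hrx
    have : r ∈ s0 := ⟨⟨hr, hrp⟩, hrx⟩
    exact hgu.trans (hgb r (subset_convexHull ℝ _ this))
  have hgpx : g p ≤ g x := by
    by_contra hlt
    push_neg at hlt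
    have hsub : convexHull ℝ ((P : Set Pt) \ {x}) ⊆ {y | g x < g y} := by
      apply convexHull_min
      · rintro r ⟨hrP, hrx⟩
        simp only [Set.mem_singleton_iff] at hrx
        by_cases hrp : r = p
        · subst hrp; exact hlt
        · exact hsep r hrP hrp hrx
      · exact convex_halfSpace_gt ⟨fun y z => map_add g y z, fun c y => map_smul g c y⟩ _
    have hxx : g x < g x := hsub hx
    exact lt_irrefl _ hxx
  -- barycentric coordinates of x
  have hb0 : b 0 = pm := rfl
  have hb1 : b 1 = p := rfl
  have hb2 : b 2 = pp := rfl
  set α := b.coord 0 x with hα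
  set β := b.coord 1 x with hβ
  set γ := b.coord 2 x with hγ
  have hsum : α + β + γ = 1 := by
    have := b.sum_coord_apply_eq_one x
    rwa [Fin.sum_univ_three] at this
  have hcomb : α • pm + β • p + γ • pp = x := by
    have := b.linear_combination_coord_eq_self x
    rwa [Fin.sum_univ_three, hb0, hb1, hb2] at this
  have happly : ∀ h : Pt →L[ℝ] ℝ, h x = α * h pm + β * h p + γ * h pp := by
    intro h
    rw [← hcomb]
    simp [smul_eq_mul]
  -- strict inequalities
  have hx1 : f1 x < f1 pm := h1lt x hxP hxpm hxp
  have hpp1 : f1 pp < f1 pm := h1lt pp hppP (fun h => hne h.symm) (fun h => hppp h.symm)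
  have hx2 : f2 x < f2 p := h2lt x hxP hxp hxpp
  have hpm2 : f2 pm < f2 p := h2lt pm hpmP hpmp hne
  have hγpos : 0 < γ := by
    have e1 := happly f1
    rw [← h1ab] at e1
    by_contra hc
    push_neg at hc
    have key : α * f1 pm + β * f1 pm + γ * f1 pm = f1 pm := by linear_combination (f1 pm) * hsum
    have hprod : γ * f1 pm ≤ γ * f1 pp := mul_le_mul_of_nonpos_left hpp1.le hc
    linarith
  have hαpos : 0 < α := by
    have e2 := happly f2
    rw [h2ab] at e2
    have hx2' : f2 x < f2 pp := h2ab ▸ hx2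
    have hpm2' : f2 pm < f2 pp := h2ab ▸ hpm2
    by_contra hc
    push_neg at hc
    have key : α * f2 pp + β * f2 pp + γ * f2 pp = f2 pp := by linear_combination (f2 pp) * hsum
    have hprod : α * f2 pp ≤ α * f2 pm := mul_le_mul_of_nonpos_left hpm2'.le hc
    linarith
  have hβpos : 0 < β := by
    have eg := happly g
    have hgpm : g x < g pm := hsep pm hpmP hpmp (fun h => hxpm h.symm)
    have hgpp : g x < g pp := hsep pp hppP (fun h => hppp h.symm) (fun h => hxpp h.symm)
    by_contra hc
    push_neg at hc
    have key : α * g x + β * g x + γ * g x = g x := by linear_combination (g x) * hsum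
    linarith [mul_lt_mul_of_pos_left hgpm hαpos, mul_lt_mul_of_pos_left hgpp hγpos,
      mul_le_mul_of_nonpos_left hgpx hc]
  have hxint : x ∈ interior (convexHull ℝ ({pm, p, pp} : Set Pt)) := by
    rw [← hrange, b.interior_convexHull]
    intro i
    fin_cases i
    · exact hαpos
    · exact hβpos
    · exact hγpos
  exact absurd hempty (Set.nonempty_iff_ne_empty.mp ⟨x, hxint, hxP⟩)

/-- If the open triangle formed by a hull vertex `p` and its hull neighbors contains
no point of `P`, then `B(P \ {p}) = B(P) \ {p}`: no interior point of `P` becomes a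
hull vertex after removing `p`. -/
theorem hullB_erase_of_empty_ear (P : Finset Pt) (hgp : GenPos P) (hn : 4 ≤ P.card)
    (pm p pp : Pt) (h1 : IsHullEdge P pm p) (h2 : IsHullEdge P p pp) (hne : pm ≠ pp)
    (hempty : interior (convexHull ℝ ({pm, p, pp} : Set Pt)) ∩ (P : Set Pt) = ∅) :
    hullB (P.erase p) = (hullB P).erase p := by
  classical
  ext x
  simp only [hullB, Finset.mem_filter, Finset.mem_erase, Finset.coe_erase]
  constructor
  · rintro ⟨⟨hxp, hxP⟩, hnot⟩
    exact ⟨hxp, hxP, fun hmem => hnot (interior_step P hgp pm p pp h1 h2 hne hempty x hxP hxp hmem)⟩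
  · rintro ⟨hxp, hxP, hnot⟩
    refine ⟨⟨hxp, hxP⟩, fun hmem => hnot ?_⟩
    refine convexHull_mono ?_ hmem
    rintro y ⟨⟨hy1, _⟩, hy2⟩
    exact ⟨hy1, hy2⟩
end

section
/- Let P be a finite point set in general position in the plane with every consecutive hull-vertex triple p_{j−1}, p_j, p_{j+1} having some point of P in the interior of triangle p_{j−1} p_j p_{j+1}. Then for every edge q q⁺ of the convex hull of the interior points I(P), the open half-plane bounded by the line through q and q⁺ on the side away from I(P) contains at most 2 hull vertices of P. -/
/-- linear functional from coefficients -/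
noncomputable def lf (a b : ℝ) : Pt →ₗ[ℝ] ℝ :=
  a • LinearMap.fst ℝ ℝ ℝ + b • LinearMap.snd ℝ ℝ ℝ

lemma lf_apply (a b : ℝ) (y : Pt) : lf a b y = a * y.1 + b * y.2 := by
  simp [lf, smul_eq_mul]

lemma lm_eq_lf (f : Pt →ₗ[ℝ] ℝ) (y : Pt) : f y = f (1,0) * y.1 + f (0,1) * y.2 := by
  have hy : y = y.1 • ((1:ℝ),(0:ℝ)) + y.2 • ((0:ℝ),(1:ℝ)) := by ext <;> simp
  nth_rewrite 1 [hy]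
  rw [map_add, map_smul, map_smul]
  simp [smul_eq_mul]
  ring

lemma collinear_of_cross (a b c : Pt)
    (h : (b.1 - a.1) * (c.2 - a.2) - (b.2 - a.2) * (c.1 - a.1) = 0) :
    Collinear ℝ ({a, b, c} : Set Pt) := by
  by_cases hba : b = a
  · subst hba
    have : ({b, b, c} : Set Pt) = {b, c} := by simp
    rw [this]
    exact collinear_pair ℝ b c
  · rw [collinear_iff_of_mem (Set.mem_insert a {b, c})]
    refine ⟨b - a, fun p hp => ?_⟩
    simp only [Set.mem_insert_iff, Set.mem_singleton_iff] at hp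
    rcases hp with rfl | rfl | rfl
    · exact ⟨0, by simp⟩
    · exact ⟨1, by simp⟩
    · have hv : b - a ≠ 0 := sub_ne_zero.mpr hba
      by_cases h1 : b.1 - a.1 = 0
      · have h2 : b.2 - a.2 ≠ 0 := by
          intro h2
          apply hv
          have : b - a = ((b.1 - a.1), (b.2 - a.2)) := rfl
          rw [this, h1, h2]; rfl
        refine ⟨(p.2 - a.2) / (b.2 - a.2), ?_⟩
        have hc1 : p.1 = a.1 := by
          have := h
          rw [h1] at this
          simp at this
          rcases this with h' | h'
          · exact absurd h' h2
          · linarith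
        show p = _ • (b - a) + a
        rw [Prod.ext_iff]
        constructor
        · simp [h1, hc1]
        · simp
          field_simp
          ring
      · refine ⟨(p.1 - a.1) / (b.1 - a.1), ?_⟩
        show p = _ • (b - a) + a
        rw [Prod.ext_iff]
        constructor
        · simp; field_simp; ring
        · simp
          field_simp
          nlinarith [h]

noncomputable def sig (f : Pt →ₗ[ℝ] ℝ) (q s : Pt) : ℝ :=
  (-(f (0,1)) * (s.1 - q.1) + (f (1,0)) * (s.2 - q.2)) / (f s - f q)

lemma coeff_sq_pos (f : Pt →ₗ[ℝ] ℝ) (hf : f ≠ 0) : 0 < f (1,0) ^ 2 + f (0,1) ^ 2 := by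
  rcases eq_or_ne (f (1,0)) 0 with h1 | h1
  · rcases eq_or_ne (f (0,1)) 0 with h2 | h2
    · exfalso; apply hf
      apply LinearMap.ext
      intro y
      rw [lm_eq_lf f y, h1, h2]; simp
    · positivity
  · positivity

lemma sig_lt_iff (f : Pt →ₗ[ℝ] ℝ) (hf : f ≠ 0) (q a b : Pt)
    (ha : f q < f a) (hb : f q < f b) :
    (sig f q a < sig f q b ↔
      0 < (a.1 - q.1) * (b.2 - q.2) - (a.2 - q.2) * (b.1 - q.1)) := by
  have hA := coeff_sq_pos f hf
  have key : (-(f (0,1)) * (b.1 - q.1) + (f (1,0)) * (b.2 - q.2)) * (f a - f q)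
      - (-(f (0,1)) * (a.1 - q.1) + (f (1,0)) * (a.2 - q.2)) * (f b - f q)
      = (f (1,0) ^ 2 + f (0,1) ^ 2) *
        ((a.1 - q.1) * (b.2 - q.2) - (a.2 - q.2) * (b.1 - q.1)) := by
    rw [lm_eq_lf f a, lm_eq_lf f b, lm_eq_lf f q]; ring
  rw [sig, sig, div_lt_div_iff₀ (by linarith) (by linarith), ← sub_pos, key]
  constructor
  · intro h
    by_contra hX
    push_neg at hX
    nlinarith
  · intro h
    exact mul_pos hA h

lemma lt_of_mem_interior (C : Set Pt) (h : Pt →ₗ[ℝ] ℝ) (c : ℝ)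
    (hC : ∀ y ∈ C, h y ≤ c) (e : Pt) (he : 0 < h e) (u : Pt)
    (hu : u ∈ interior C) : h u < c := by
  rw [mem_interior_iff_mem_nhds, Metric.mem_nhds_iff] at hu
  obtain ⟨ε, hε, hball⟩ := hu
  have he0 : e ≠ 0 := by intro h0; rw [h0] at he; simp at he
  have hne : 0 < ‖e‖ := norm_pos_iff.mpr he0
  set δ := ε / (2 * ‖e‖) with hδ
  have hδ0 : 0 < δ := by positivity
  have hmem : u + δ • e ∈ C := by
    apply hball
    rw [Metric.mem_ball, dist_eq_norm]
    have h1 : u + δ • e - u = δ • e := by abel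
    rw [h1, norm_smul, Real.norm_eq_abs, abs_of_pos hδ0]
    have : δ * ‖e‖ = ε / 2 := by
      rw [hδ]; field_simp
    rw [this]; linarith
  have h2 := hC _ hmem
  rw [map_add, map_smul, smul_eq_mul] at h2
  nlinarith

lemma combo3_mem_convexHull (c₁ c₂ c₃ : ℝ) (y₁ y₂ y₃ : Pt)
    (h₁ : 0 ≤ c₁) (h₂ : 0 ≤ c₂) (h₃ : 0 ≤ c₃) (hsum : c₁ + c₂ + c₃ = 1) :
    c₁ • y₁ + c₂ • y₂ + c₃ • y₃ ∈ convexHull ℝ ({y₁, y₂, y₃} : Set Pt) := by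
  have hcm : (Finset.univ : Finset (Fin 3)).centerMass ![c₁, c₂, c₃] ![y₁, y₂, y₃]
      = c₁ • y₁ + c₂ • y₂ + c₃ • y₃ := by
    simp [Finset.centerMass, Fin.sum_univ_three, hsum]
  rw [← hcm]
  apply Finset.centerMass_mem_convexHull
  · intro i _; fin_cases i <;> simpa
  · rw [Fin.sum_univ_three]; simp; linarith
  · intro i _; fin_cases i <;> simp

lemma segment_subset_frontier (P : Finset Pt) (h : Pt →ₗ[ℝ] ℝ) (v w z : Pt)
    (hv : v ∈ P) (hw : w ∈ P) (hz : z ∈ P)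
    (heq : h v = h w) (hmax : ∀ x ∈ P, h x ≤ h v) (hzlt : h z < h v) :
    segment ℝ v w ⊆ frontier (convexHull ℝ (P : Set Pt)) := by
  have hclosed : IsClosed (convexHull ℝ (P : Set Pt)) :=
    (P.finite_toSet.isCompact_convexHull ℝ).isClosed
  have hsub : convexHull ℝ (P : Set Pt) ⊆ {y | h y ≤ h v} :=
    convexHull_min (fun x hx => hmax x hx) (convex_halfSpace_le h.isLinear _)
  intro u hu
  obtain ⟨a, b, ha, hb, hab, rfl⟩ := hu
  have huC : a • v + b • w ∈ convexHull ℝ (P : Set Pt) :=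
    (convex_convexHull ℝ (P : Set Pt))
      (subset_convexHull ℝ _ (Finset.mem_coe.mpr hv))
      (subset_convexHull ℝ _ (Finset.mem_coe.mpr hw)) ha hb hab
  have hval : h (a • v + b • w) = h v := by
    rw [map_add, map_smul, map_smul, smul_eq_mul, smul_eq_mul, ← heq]
    linear_combination (h v) * hab
  have hnotint : a • v + b • w ∉ interior (convexHull ℝ (P : Set Pt)) := by
    intro hint
    have hlt := lt_of_mem_interior _ h (h v) (fun y hy => hsub hy) (v - z)
      (by rw [map_sub]; linarith) _ hint
    rw [hval] at hlt
    exact lt_irrefl _ hlt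
  rw [hclosed.frontier_eq]
  exact ⟨huC, hnotint⟩


lemma consecutive_edge (P : Finset Pt) (hgp : GenPos P) (f : Pt →ₗ[ℝ] ℝ) (hf : f ≠ 0)
    (q : Pt) (hqP : q ∈ P) (v w : Pt) (hvP : v ∈ P) (hwP : w ∈ P)
    (hfv : f q < f v) (hfw : f q < f w)
    (hvhull : v ∉ convexHull ℝ ((P : Set Pt) \ {v}))
    (hwhull : w ∉ convexHull ℝ ((P : Set Pt) \ {w}))
    (horder : sig f q v < sig f q w)
    (hbetween : ∀ x ∈ P, f q < f x → ¬(sig f q v < sig f q x ∧ sig f q x < sig f q w)) :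
    ∃ h : Pt →ₗ[ℝ] ℝ, h v = h w ∧ h q < h v ∧ (∀ x ∈ P, h x ≤ h v) ∧ IsHullEdge P v w := by
  have hden : 0 < (v.1 - q.1) * (w.2 - q.2) - (v.2 - q.2) * (w.1 - q.1) :=
    (sig_lt_iff f hf q v w hfv hfw).1 horder
  have hden0 : (v.1 - q.1) * (w.2 - q.2) - (v.2 - q.2) * (w.1 - q.1) ≠ 0 := ne_of_gt hden
  have hvw : v ≠ w := by
    intro h; rw [h] at horder; exact lt_irrefl _ horder
  have hqv : q ≠ v := fun h => by rw [← h] at hfv; exact lt_irrefl _ hfv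
  have hqw : q ≠ w := fun h => by rw [← h] at hfw; exact lt_irrefl _ hfw
  obtain ⟨h, happ⟩ : ∃ h : Pt →ₗ[ℝ] ℝ,
      ∀ y : Pt, h y = (w.2 - v.2) * y.1 + (v.1 - w.1) * y.2 :=
    ⟨lf (w.2 - v.2) (v.1 - w.1), fun y => lf_apply _ _ y⟩
  have hhvw : h v = h w := by rw [happ, happ]; ring
  have hqlt : h q < h v := by
    have : h v - h q = (v.1 - q.1) * (w.2 - q.2) - (v.2 - q.2) * (w.1 - q.1) := by
      rw [happ, happ]; ring
    linarith
  have hmax : ∀ x ∈ P, h x ≤ h v := by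
    intro x hxP
    by_contra hgt
    push_neg at hgt
    obtain ⟨s, hs_def⟩ : ∃ s : ℝ, s = ((x.1 - q.1) * (w.2 - q.2) - (x.2 - q.2) * (w.1 - q.1)) /
        ((v.1 - q.1) * (w.2 - q.2) - (v.2 - q.2) * (w.1 - q.1)) := ⟨_, rfl⟩
    obtain ⟨t, ht_def⟩ : ∃ t : ℝ, t = ((v.1 - q.1) * (x.2 - q.2) - (v.2 - q.2) * (x.1 - q.1)) /
        ((v.1 - q.1) * (w.2 - q.2) - (v.2 - q.2) * (w.1 - q.1)) := ⟨_, rfl⟩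
    have hx1 : x.1 - q.1 = s * (v.1 - q.1) + t * (w.1 - q.1) := by
      rw [hs_def, ht_def, div_mul_eq_mul_div, div_mul_eq_mul_div, ← add_div, eq_div_iff hden0]; ring
    have hx2 : x.2 - q.2 = s * (v.2 - q.2) + t * (w.2 - q.2) := by
      rw [hs_def, ht_def, div_mul_eq_mul_div, div_mul_eq_mul_div, ← add_div, eq_div_iff hden0]; ring
    have key : h x - h v = (s + t - 1) *
        ((v.1 - q.1) * (w.2 - q.2) - (v.2 - q.2) * (w.1 - q.1)) := by
      rw [happ, happ]
      linear_combination (w.2 - v.2) * hx1 + (v.1 - w.1) * hx2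
    have hst : 1 < s + t := by nlinarith
    have hxv : x ≠ v := by intro h'; rw [h'] at hgt; exact lt_irrefl _ hgt
    have hxw : x ≠ w := by intro h'; rw [h', ← hhvw] at hgt; exact lt_irrefl _ hgt
    have hxq : x ≠ q := by
      intro h'; rw [h'] at hgt; linarith
    rcases lt_or_ge t 0 with ht | ht
    · -- v ∈ conv {q, x, w}
      have hs0 : 0 < s := by linarith
      have hs0' : s ≠ 0 := ne_of_gt hs0
      have hveq : v = (1 - (1 - t) / s) • q + (1 / s) • x + (-t / s) • w := by
        have c1 : v.1 = (1 - (1 - t) / s) * q.1 + (1 / s) * x.1 + (-t / s) * w.1 := by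
          field_simp
          first
          | linear_combination hx1
          | linear_combination -hx1
          | linear_combination s * hx1
          | linear_combination (-s) * hx1
        have c2 : v.2 = (1 - (1 - t) / s) * q.2 + (1 / s) * x.2 + (-t / s) * w.2 := by
          field_simp
          first
          | linear_combination hx2
          | linear_combination -hx2
          | linear_combination s * hx2
          | linear_combination (-s) * hx2
        rw [Prod.ext_iff]
        exact ⟨by simpa using c1, by simpa using c2⟩
      apply hvhull
      apply convexHull_mono (show ({q, x, w} : Set Pt) ⊆ (P : Set Pt) \ {v} from ?_)
      · rw [hveq]
        apply combo3_mem_convexHull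
        · have : (1 - t) / s ≤ 1 := by rw [div_le_one hs0]; linarith
          linarith
        · positivity
        · exact div_nonneg (by linarith) (le_of_lt hs0)
        · field_simp
          ring
      · intro y hy
        simp only [Set.mem_insert_iff, Set.mem_singleton_iff] at hy
        rcases hy with rfl | rfl | rfl
        · exact ⟨Finset.mem_coe.mpr hqP, fun h' => hqv (Set.mem_singleton_iff.mp h')⟩
        · exact ⟨Finset.mem_coe.mpr hxP, fun h' => hxv (Set.mem_singleton_iff.mp h')⟩
        · exact ⟨Finset.mem_coe.mpr hwP, fun h' => hvw (Set.mem_singleton_iff.mp h').symm⟩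
    · rcases lt_or_ge s 0 with hs | hs
      · -- w ∈ conv {q, x, v}
        have ht0 : 0 < t := by linarith
        have ht0' : t ≠ 0 := ne_of_gt ht0
        have hweq : w = (1 - (1 - s) / t) • q + (1 / t) • x + (-s / t) • v := by
          have c1 : w.1 = (1 - (1 - s) / t) * q.1 + (1 / t) * x.1 + (-s / t) * v.1 := by
            field_simp
            first
            | linear_combination hx1
            | linear_combination -hx1
            | linear_combination t * hx1
            | linear_combination (-t) * hx1
          have c2 : w.2 = (1 - (1 - s) / t) * q.2 + (1 / t) * x.2 + (-s / t) * v.2 := by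
            field_simp
            first
            | linear_combination hx2
            | linear_combination -hx2
            | linear_combination t * hx2
            | linear_combination (-t) * hx2
          rw [Prod.ext_iff]
          exact ⟨by simpa using c1, by simpa using c2⟩
        apply hwhull
        apply convexHull_mono (show ({q, x, v} : Set Pt) ⊆ (P : Set Pt) \ {w} from ?_)
        · rw [hweq]
          apply combo3_mem_convexHull
          · have : (1 - s) / t ≤ 1 := by rw [div_le_one ht0]; linarith
            linarith
          · positivity
          · exact div_nonneg (by linarith) (le_of_lt ht0)
          · field_simp
            ring
        · intro y hy
          simp only [Set.mem_insert_iff, Set.mem_singleton_iff] at hy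
          rcases hy with rfl | rfl | rfl
          · exact ⟨Finset.mem_coe.mpr hqP, fun h' => hqw (Set.mem_singleton_iff.mp h')⟩
          · exact ⟨Finset.mem_coe.mpr hxP, fun h' => hxw (Set.mem_singleton_iff.mp h')⟩
          · exact ⟨Finset.mem_coe.mpr hvP, fun h' => hvw (Set.mem_singleton_iff.mp h')⟩
      · rcases eq_or_lt_of_le hs with hs0 | hs0
        · -- s = 0 : q, w, x collinear
          have hcol : Collinear ℝ ({q, w, x} : Set Pt) := by
            apply collinear_of_cross
            rw [← hs0] at hx1 hx2
            linear_combination (w.1 - q.1) * hx2 - (w.2 - q.2) * hx1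
          exact hgp q hqP w hwP x hxP hqw (Ne.symm hxw) (Ne.symm hxq) hcol
        · rcases eq_or_lt_of_le ht with ht0 | ht0
          · -- t = 0 : q, v, x collinear
            have hcol : Collinear ℝ ({q, v, x} : Set Pt) := by
              apply collinear_of_cross
              rw [← ht0] at hx1 hx2
              linear_combination (v.1 - q.1) * hx2 - (v.2 - q.2) * hx1
            exact hgp q hqP v hvP x hxP hqv (Ne.symm hxv) (Ne.symm hxq) hcol
          · -- 0 < s, 0 < t : x is strictly between
            have hfx : f q < f x := by
              have hfd : f x - f q = s * (f v - f q) + t * (f w - f q) := by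
                rw [lm_eq_lf f x, lm_eq_lf f v, lm_eq_lf f w, lm_eq_lf f q]
                linear_combination (f (1,0)) * hx1 + (f (0,1)) * hx2
              nlinarith
            apply hbetween x hxP hfx
            constructor
            · rw [sig_lt_iff f hf q v x hfv hfx]
              have heq2 : (v.1 - q.1) * (x.2 - q.2) - (v.2 - q.2) * (x.1 - q.1) = t *
                  ((v.1 - q.1) * (w.2 - q.2) - (v.2 - q.2) * (w.1 - q.1)) := by
                linear_combination (v.1 - q.1) * hx2 - (v.2 - q.2) * hx1
              rw [heq2]
              exact mul_pos ht0 hden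
            · rw [sig_lt_iff f hf q x w hfx hfw]
              have heq2 : (x.1 - q.1) * (w.2 - q.2) - (x.2 - q.2) * (w.1 - q.1) = s *
                  ((v.1 - q.1) * (w.2 - q.2) - (v.2 - q.2) * (w.1 - q.1)) := by
                linear_combination (w.2 - q.2) * hx1 - (w.1 - q.1) * hx2
              rw [heq2]
              exact mul_pos hs0 hden
  refine ⟨h, hhvw, hqlt, hmax, ?_, ?_, hvw,
    segment_subset_frontier P h v w q hvP hwP hqP hhvw hmax hqlt⟩
  · simp only [hullB, Finset.mem_filter]
    exact ⟨hvP, hvhull⟩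
  · simp only [hullB, Finset.mem_filter]
    exact ⟨hwP, hwhull⟩

/-- If every triangle of three consecutive hull vertices of `P` contains a point of `P`
in its interior, then for every hull edge `q q⁺` of `I(P)` the outer open half-plane
contains at most two hull vertices of `P`. -/
theorem outer_halfplane_at_most_two (P : Finset Pt) (hgp : GenPos P)
    (hi : 3 ≤ (intI P).card) (htf : TripleFilled P)
    (q q' : Pt) (H : Set Pt) (hedge : IsHullEdge (intI P) q q')
    (hH : IsOuterHalf (intI P) q q' H) :
    ((hullB P : Set Pt) ∩ H).ncard ≤ 2 := by
  classical
  obtain ⟨f, hf0, hfq', hHdef, hfI⟩ := hH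
  have hqI : q ∈ intI P := by
    have h1 := hedge.1
    simp only [hullB, Finset.mem_filter] at h1
    exact h1.1
  have hqP : q ∈ P := by
    have h1 := hqI
    simp only [intI, Finset.mem_sdiff] at h1
    exact h1.1
  set SF : Finset Pt := P.filter (fun x => f q < f x) with hSF
  have hmemSF : ∀ x, x ∈ SF ↔ x ∈ P ∧ f q < f x := by
    intro x; simp [hSF, Finset.mem_filter]
  have hIntI : ∀ x ∈ P, x ∈ convexHull ℝ ((P : Set Pt) \ {x}) → x ∈ intI P := by
    intro x hxP hconv
    simp only [intI, Finset.mem_sdiff, hullB, Finset.mem_filter]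
    exact ⟨hxP, fun hh => hh.2 hconv⟩
  have hnothull : ∀ x ∈ SF, x ∉ convexHull ℝ ((P : Set Pt) \ {x}) := by
    intro x hx hconv
    obtain ⟨hxP, hfx⟩ := (hmemSF x).1 hx
    exact absurd (hfI x (hIntI x hxP hconv)) (not_le.mpr hfx)
  have hset : (hullB P : Set Pt) ∩ H = (SF : Set Pt) := by
    rw [hHdef]
    ext x
    simp only [Set.mem_inter_iff, Set.mem_setOf_eq, Finset.mem_coe, hmemSF]
    constructor
    · rintro ⟨hxB, hfx⟩
      have hxP : x ∈ P := by
        simp only [hullB, Finset.mem_filter] at hxB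
        exact hxB.1
      exact ⟨hxP, hfx⟩
    · rintro ⟨hxP, hfx⟩
      refine ⟨?_, hfx⟩
      simp only [hullB, Finset.mem_filter]
      refine ⟨hxP, fun hconv => ?_⟩
      exact absurd (hfI x (hIntI x hxP hconv)) (not_le.mpr hfx)
  rw [hset, Set.ncard_coe_finset]
  by_contra hcard
  push_neg at hcard
  have hsigne : ∀ x ∈ SF, ∀ y ∈ SF, x ≠ y → sig f q x ≠ sig f q y := by
    intro x hx y hy hxy heq
    obtain ⟨hxP, hfx⟩ := (hmemSF x).1 hx
    obtain ⟨hyP, hfy⟩ := (hmemSF y).1 hy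
    have h1 : ¬ (sig f q x < sig f q y) := by rw [heq]; exact lt_irrefl _
    have h2 : ¬ (sig f q y < sig f q x) := by rw [heq]; exact lt_irrefl _
    rw [sig_lt_iff f hf0 q x y hfx hfy] at h1
    rw [sig_lt_iff f hf0 q y x hfy hfx] at h2
    push_neg at h1 h2
    have hcross : (x.1 - q.1) * (y.2 - q.2) - (x.2 - q.2) * (y.1 - q.1) = 0 := by nlinarith
    have hqx : q ≠ x := fun hh => by rw [← hh] at hfx; exact lt_irrefl _ hfx
    have hqy : q ≠ y := fun hh => by rw [← hh] at hfy; exact lt_irrefl _ hfy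
    exact hgp q hqP x hxP y hyP hqx hxy hqy (collinear_of_cross q x y hcross)
  have hne1 : SF.Nonempty := Finset.card_pos.mp (by omega)
  obtain ⟨a, haSF, hamin⟩ := Finset.exists_min_image SF (sig f q) hne1
  have hne2 : (SF.erase a).Nonempty := by
    rw [← Finset.card_pos, Finset.card_erase_of_mem haSF]; omega
  obtain ⟨p, hpSF', hpmin⟩ := Finset.exists_min_image _ (sig f q) hne2
  have hpSF : p ∈ SF := Finset.mem_of_mem_erase hpSF'
  have hap : a ≠ p := (Finset.ne_of_mem_erase hpSF').symm
  have hne3 : ((SF.erase a).erase p).Nonempty := by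
    rw [← Finset.card_pos, Finset.card_erase_of_mem hpSF', Finset.card_erase_of_mem haSF]
    omega
  obtain ⟨c, hcSF'', hcmin⟩ := Finset.exists_min_image _ (sig f q) hne3
  have hcSF' : c ∈ SF.erase a := Finset.mem_of_mem_erase hcSF''
  have hcSF : c ∈ SF := Finset.mem_of_mem_erase hcSF'
  have hpc : p ≠ c := (Finset.ne_of_mem_erase hcSF'').symm
  have hac : a ≠ c := (Finset.ne_of_mem_erase hcSF').symm
  have hsap : sig f q a < sig f q p :=
    lt_of_le_of_ne (hamin p hpSF) (hsigne a haSF p hpSF hap)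
  have hspc : sig f q p < sig f q c :=
    lt_of_le_of_ne (hpmin c hcSF') (hsigne p hpSF c hcSF hpc)
  have hbet1 : ∀ x ∈ P, f q < f x →
      ¬(sig f q a < sig f q x ∧ sig f q x < sig f q p) := by
    rintro x hxP hfx ⟨h1, h2⟩
    have hxSF : x ∈ SF := (hmemSF x).2 ⟨hxP, hfx⟩
    have hxa : x ≠ a := fun hh => by rw [hh] at h1; exact lt_irrefl _ h1
    have := hpmin x (Finset.mem_erase.mpr ⟨hxa, hxSF⟩)
    linarith
  have hbet2 : ∀ x ∈ P, f q < f x →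
      ¬(sig f q p < sig f q x ∧ sig f q x < sig f q c) := by
    rintro x hxP hfx ⟨h1, h2⟩
    have hxSF : x ∈ SF := (hmemSF x).2 ⟨hxP, hfx⟩
    have hxp : x ≠ p := fun hh => by rw [hh] at h1; exact lt_irrefl _ h1
    have hxa : x ≠ a := by
      intro hh
      rw [hh] at h1
      exact absurd (lt_trans hsap h1) (lt_irrefl _)
    have := hcmin x (Finset.mem_erase.mpr ⟨hxp, Finset.mem_erase.mpr ⟨hxa, hxSF⟩⟩)
    linarith
  obtain ⟨haP, hfa⟩ := (hmemSF a).1 haSF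
  obtain ⟨hpP, hfp⟩ := (hmemSF p).1 hpSF
  obtain ⟨hcP, hfc⟩ := (hmemSF c).1 hcSF
  obtain ⟨h₁, h₁ap, h₁q, h₁max, hedge1⟩ :=
    consecutive_edge P hgp f hf0 q hqP a p haP hpP hfa hfp
      (hnothull a haSF) (hnothull p hpSF) hsap hbet1
  obtain ⟨h₂, h₂pc, h₂q, h₂max, hedge2⟩ :=
    consecutive_edge P hgp f hf0 q hqP p c hpP hcP hfp hfc
      (hnothull p hpSF) (hnothull c hcSF) hspc hbet2
  obtain ⟨x, hxint, hxP⟩ := htf a p c hedge1 hedge2 hac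
  have hxPF : x ∈ P := Finset.mem_coe.mp hxP
  have htri_subH : convexHull ℝ ({a, p, c} : Set Pt) ⊆ {y | f q < f y} := by
    apply convexHull_min ?_ (convex_halfSpace_gt f.isLinear _)
    intro y hy
    simp only [Set.mem_insert_iff, Set.mem_singleton_iff] at hy
    rcases hy with rfl | rfl | rfl <;> assumption
  have hfx : f q < f x := htri_subH (interior_subset hxint)
  have hsub1 : convexHull ℝ ({a, p, c} : Set Pt) ⊆ {y | h₁ y ≤ h₁ a} := by
    apply convexHull_min ?_ (convex_halfSpace_le h₁.isLinear _)
    intro y hy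
    simp only [Set.mem_insert_iff, Set.mem_singleton_iff] at hy
    simp only [Set.mem_setOf_eq]
    rcases hy with h | h | h
    · rw [h]
    · rw [h]; exact le_of_eq h₁ap.symm
    · rw [h]; exact h₁max c hcP
  have hxlt1 : h₁ x < h₁ a :=
    lt_of_mem_interior _ h₁ (h₁ a) (fun y hy => hsub1 hy) (a - q)
      (by rw [map_sub]; linarith) x hxint
  have hsub2 : convexHull ℝ ({a, p, c} : Set Pt) ⊆ {y | h₂ y ≤ h₂ p} := by
    apply convexHull_min ?_ (convex_halfSpace_le h₂.isLinear _)
    intro y hy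
    simp only [Set.mem_insert_iff, Set.mem_singleton_iff] at hy
    simp only [Set.mem_setOf_eq]
    rcases hy with h | h | h
    · rw [h]; exact h₂max a haP
    · rw [h]
    · rw [h]; exact le_of_eq h₂pc.symm
  have hxlt2 : h₂ x < h₂ p :=
    lt_of_mem_interior _ h₂ (h₂ p) (fun y hy => hsub2 hy) (p - q)
      (by rw [map_sub]; linarith) x hxint
  have hxa : x ≠ a := fun hh => by rw [hh] at hxlt1; exact lt_irrefl _ hxlt1
  have hxp : x ≠ p := fun hh => by rw [hh] at hxlt2; exact lt_irrefl _ hxlt2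
  have hxc : x ≠ c := fun hh => by rw [hh, ← h₂pc] at hxlt2; exact lt_irrefl _ hxlt2
  have hxconv : x ∈ convexHull ℝ ((P : Set Pt) \ {x}) := by
    apply convexHull_mono
      (show ({a, p, c} : Set Pt) ⊆ (P : Set Pt) \ {x} from ?_) (interior_subset hxint)
    intro y hy
    simp only [Set.mem_insert_iff, Set.mem_singleton_iff] at hy
    rcases hy with rfl | rfl | rfl
    · exact ⟨Finset.mem_coe.mpr haP, fun h' => hxa (Set.mem_singleton_iff.mp h').symm⟩
    · exact ⟨Finset.mem_coe.mpr hpP, fun h' => hxp (Set.mem_singleton_iff.mp h').symm⟩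
    · exact ⟨Finset.mem_coe.mpr hcP, fun h' => hxc (Set.mem_singleton_iff.mp h').symm⟩
  exact absurd (hfI x (hIntI x hxPF hxconv)) (not_le.mpr hfx)
end
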